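/- arXiv:2404.18765 — 2 statements merged into one kernel-verified Lean document; each statement's English description precedes it below -/
import Mathlib

section
/- Under assumptions (A1)–(A4) with μ > 2, for every (f1,f2), (g1,g2) ∈ 𝒦 and every η ∈ [s0,r0] one has |G1(η; f1,f2) − G1(η; g1,g2)| ≤ G̃1·‖(f1,f2) − (g1,g2)‖, where G̃1 = H1sup·Φ̃1 + H̃1/(L1m·(μ+ν−1)·s0^(μ+ν−1)), H1sup = K1M/(E1inf·(μ+ν−1)·s0^(μ+ν−1)), Φ̃1 = Ẽ1/(L1m·(μ+ν−1)·s0^(μ+ν−1)) + L̃1/(L1m²·(2μ+ν−1)·s0^(2μ+ν−1)), H̃1 = (K̃1 + K1M·Ẽ1/E1inf)/(E1inf·(μ+ν−1)·s0^(μ+ν−1)), E1inf = exp(−[a·N1M/(L1m·(μ−1)·s0^(2μ−2)) + D1·K1M/(H_inf·L1m·(2μ+ν−1)·s0^(2μ+ν−1))]), Ẽ1 = 2a·[Ñ1/(L1m·(μ−2)·s0^(μ−2)) + N1M·L̃1/(L1m²·(3μ−2)·s0^(3μ−2))] + D1·[K̃1/(H_inf·L1m·(2μ+ν−1)·s0^(2μ+ν−1))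 + (K1M/(H_inf·L1m))·(H̃/(H_inf·(2μ+ν−1)·s0^(2μ+ν−1)) + L̃1/(L1m·(3μ+ν−1)·s0^(3μ+ν−1)))], H_inf = (K1m/(μ+ν−1))·(s0^(−(μ+ν−1)) − r0^(−(μ+ν−1))), and H̃ = (K̃1·s0^(−(μ+ν−1)) + K̃2·r0^(−(μ+ν−1)))/(μ+ν−1). -/
open MeasureTheory Filter Topology

noncomputable section

/-- The bundle of fixed constants of the problem. -/
structure Cst where
  nu : ℝ
  mu : ℝ
  a : ℝ
  D1 : ℝ
  D2 : ℝ
  Q : ℝ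
  D1s : ℝ
  D2s : ℝ
  L1m : ℝ
  L1M : ℝ
  N1m : ℝ
  N1M : ℝ
  K1m : ℝ
  K1M : ℝ
  L2m : ℝ
  L2M : ℝ
  N2m : ℝ
  N2M : ℝ
  K2m : ℝ
  K2M : ℝ
  Lt1 : ℝ
  Nt1 : ℝ
  Kt1 : ℝ
  Lt2 : ℝ
  Nt2 : ℝ
  Kt2 : ℝ

/-- The space `C[s0,r0]`, modeled as real functions continuous on `[s0,r0]`. -/
def C1 (s0 r0 : ℝ) : Set (ℝ → ℝ) := {f | ContinuousOn f (Set.Icc s0 r0)}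

/-- The set `ℳ ⊆ C_b[r0,∞)`: bounded continuous functions on `[r0,∞)` with
`f(r0) = 0` and `f(η) → -1` as `η → ∞`. -/
def Mset (r0 : ℝ) : Set (ℝ → ℝ) :=
  {f | ContinuousOn f (Set.Ici r0) ∧ (∃ C, ∀ x ∈ Set.Ici r0, |f x| ≤ C) ∧
    f r0 = 0 ∧ Tendsto f atTop (𝓝 (-1))}

/-- Sup norm of `f` over the set `S`. -/
def supOn (S : Set ℝ) (f : ℝ → ℝ) : ℝ := ⨆ x : S, |f x.1|

/-- Norm of the difference of two pairs in `𝒦 = C[s0,r0] × ℳ`. -/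
def pairNorm (s0 r0 : ℝ) (f1 f2 g1 g2 : ℝ → ℝ) : ℝ :=
  max (supOn (Set.Icc s0 r0) (f1 - g1)) (supOn (Set.Ici r0) (f2 - g2))

/-- Positivity assumptions on all the fixed constants and on `s0, r0`. -/
def PosC (c : Cst) (s0 r0 : ℝ) : Prop :=
  0 < c.a ∧ 0 < c.nu ∧ c.nu < 1 ∧ 2 < c.mu ∧ 0 < s0 ∧ s0 < r0 ∧
  0 < c.D1 ∧ 0 < c.D2 ∧ 0 < c.Q ∧ 0 < c.D1s ∧ 0 < c.D2s ∧
  0 < c.L1m ∧ 0 < c.L1M ∧ 0 < c.N1m ∧ 0 < c.N1M ∧ 0 < c.K1m ∧ 0 < c.K1M ∧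
  0 < c.L2m ∧ 0 < c.L2M ∧ 0 < c.N2m ∧ 0 < c.N2M ∧ 0 < c.K2m ∧ 0 < c.K2M ∧
  0 < c.Lt1 ∧ 0 < c.Nt1 ∧ 0 < c.Kt1 ∧ 0 < c.Lt2 ∧ 0 < c.Nt2 ∧ 0 < c.Kt2

/-- Positivity assumptions on all the fixed constants (no `s0, r0`). -/
def PosCst (c : Cst) : Prop :=
  0 < c.a ∧ 0 < c.nu ∧ c.nu < 1 ∧ 2 < c.mu ∧
  0 < c.D1 ∧ 0 < c.D2 ∧ 0 < c.Q ∧ 0 < c.D1s ∧ 0 < c.D2s ∧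
  0 < c.L1m ∧ 0 < c.L1M ∧ 0 < c.N1m ∧ 0 < c.N1M ∧ 0 < c.K1m ∧ 0 < c.K1M ∧
  0 < c.L2m ∧ 0 < c.L2M ∧ 0 < c.N2m ∧ 0 < c.N2M ∧ 0 < c.K2m ∧ 0 < c.K2M ∧
  0 < c.Lt1 ∧ 0 < c.Nt1 ∧ 0 < c.Kt1 ∧ 0 < c.Lt2 ∧ 0 < c.Nt2 ∧ 0 < c.Kt2

/-- Assumptions (A1)–(A4): continuity of the images of `L, N, K`, the two-sided
bounds and the Lipschitz bounds. -/
def Assum (c : Cst) (s0 r0 : ℝ) (L1 N1 K1 L2 N2 K2 : (ℝ → ℝ) → ℝ → ℝ) : Prop :=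
  (∀ f1 ∈ C1 s0 r0,
    ContinuousOn (L1 f1) (Set.Icc s0 r0) ∧ ContinuousOn (N1 f1) (Set.Icc s0 r0) ∧
      ContinuousOn (K1 f1) (Set.Icc s0 r0)) ∧
  (∀ f2 ∈ Mset r0,
    ContinuousOn (L2 f2) (Set.Ici r0) ∧ ContinuousOn (N2 f2) (Set.Ici r0) ∧
      ContinuousOn (K2 f2) (Set.Ici r0)) ∧
  (∀ f1 ∈ C1 s0 r0, ∀ η ∈ Set.Icc s0 r0,
    c.L1m * η ^ c.mu ≤ L1 f1 η ∧ L1 f1 η ≤ c.L1M * η ^ c.mu ∧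
    c.N1m * η ^ (-c.mu) ≤ N1 f1 η ∧ N1 f1 η ≤ c.N1M * η ^ (-c.mu) ∧
    c.K1m * η ^ (-c.mu) ≤ K1 f1 η ∧ K1 f1 η ≤ c.K1M * η ^ (-c.mu)) ∧
  (∀ f2 ∈ Mset r0, ∀ η ∈ Set.Ici r0,
    c.L2m * η ^ c.mu ≤ L2 f2 η ∧ L2 f2 η ≤ c.L2M * η ^ c.mu ∧
    c.N2m * η ^ (-c.mu) ≤ N2 f2 η ∧ N2 f2 η ≤ c.N2M * η ^ (-c.mu) ∧
    c.K2m * η ^ (-c.mu) ≤ K2 f2 η ∧ K2 f2 η ≤ c.K2M * η ^ (-c.mu)) ∧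
  (∀ f1 ∈ C1 s0 r0, ∀ g1 ∈ C1 s0 r0, ∀ η ∈ Set.Icc s0 r0,
    |L1 f1 η - L1 g1 η| ≤ c.Lt1 * supOn (Set.Icc s0 r0) (f1 - g1) ∧
    |N1 f1 η - N1 g1 η| ≤ c.Nt1 * supOn (Set.Icc s0 r0) (f1 - g1) ∧
    |K1 f1 η - K1 g1 η| ≤ c.Kt1 * η ^ (-c.mu) * supOn (Set.Icc s0 r0) (f1 - g1)) ∧
  (∀ f2 ∈ Mset r0, ∀ g2 ∈ Mset r0, ∀ η ∈ Set.Ici r0,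
    |L2 f2 η - L2 g2 η| ≤ c.Lt2 * supOn (Set.Ici r0) (f2 - g2) ∧
    |N2 f2 η - N2 g2 η| ≤ c.Nt2 * supOn (Set.Ici r0) (f2 - g2) ∧
    |K2 f2 η - K2 g2 η| ≤ c.Kt2 * η ^ (-c.mu) * supOn (Set.Ici r0) (f2 - g2))

/-- `H(f1,f2) = ∫_{s0}^{r0} K(f1)(v)/v^ν dv + ∫_{r0}^{∞} K(f2)(v)/v^ν dv`. -/
def Hf (c : Cst) (s0 r0 : ℝ) (L1 N1 K1 L2 N2 K2 : (ℝ → ℝ) → ℝ → ℝ) (f1 f2 : ℝ → ℝ) : ℝ :=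
  (∫ v in s0..r0, K1 f1 v / v ^ c.nu) + ∫ v in Set.Ioi r0, K2 f2 v / v ^ c.nu

/-- `E1(η; f1,f2)`. -/
def E1f (c : Cst) (s0 r0 : ℝ) (L1 N1 K1 L2 N2 K2 : (ℝ → ℝ) → ℝ → ℝ) (f1 f2 : ℝ → ℝ)
    (η : ℝ) : ℝ :=
  Real.exp (-(∫ v in s0..η,
    (2 * c.a * v * (N1 f1 v / L1 f1 v)
      + c.D1 / Hf c s0 r0 L1 N1 K1 L2 N2 K2 f1 f2 * (K1 f1 v / (L1 f1 v * v ^ c.nu)))))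

/-- `Φ1(η; f1,f2)`. -/
def Phi1f (c : Cst) (s0 r0 : ℝ) (L1 N1 K1 L2 N2 K2 : (ℝ → ℝ) → ℝ → ℝ) (f1 f2 : ℝ → ℝ)
    (η : ℝ) : ℝ :=
  ∫ v in s0..η, E1f c s0 r0 L1 N1 K1 L2 N2 K2 f1 f2 v / (L1 f1 v * v ^ c.nu)

/-- `H1(η; f1,f2)`. -/
def H1f (c : Cst) (s0 r0 : ℝ) (L1 N1 K1 L2 N2 K2 : (ℝ → ℝ) → ℝ → ℝ) (f1 f2 : ℝ → ℝ)
    (η : ℝ) : ℝ :=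
  ∫ v in s0..η, K1 f1 v / (v ^ c.nu * E1f c s0 r0 L1 N1 K1 L2 N2 K2 f1 f2 v)

/-- `G1(η; f1,f2)`. -/
def G1f (c : Cst) (s0 r0 : ℝ) (L1 N1 K1 L2 N2 K2 : (ℝ → ℝ) → ℝ → ℝ) (f1 f2 : ℝ → ℝ)
    (η : ℝ) : ℝ :=
  ∫ v in s0..η, E1f c s0 r0 L1 N1 K1 L2 N2 K2 f1 f2 v
    * H1f c s0 r0 L1 N1 K1 L2 N2 K2 f1 f2 v / (L1 f1 v * v ^ c.nu)

/-- `V1(f1,f2)(η)`. -/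
def V1f (c : Cst) (s0 r0 : ℝ) (L1 N1 K1 L2 N2 K2 : (ℝ → ℝ) → ℝ → ℝ) (f1 f2 : ℝ → ℝ)
    (η : ℝ) : ℝ :=
  s0 ^ c.nu * c.Q * Real.exp (-s0 ^ 2)
      * (Phi1f c s0 r0 L1 N1 K1 L2 N2 K2 f1 f2 r0 - Phi1f c s0 r0 L1 N1 K1 L2 N2 K2 f1 f2 η)
    + c.D1s / Hf c s0 r0 L1 N1 K1 L2 N2 K2 f1 f2 ^ 2
      * (G1f c s0 r0 L1 N1 K1 L2 N2 K2 f1 f2 r0 - G1f c s0 r0 L1 N1 K1 L2 N2 K2 f1 f2 η)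

/-- `E2(η; f1,f2)`. -/
def E2f (c : Cst) (s0 r0 : ℝ) (L1 N1 K1 L2 N2 K2 : (ℝ → ℝ) → ℝ → ℝ) (f1 f2 : ℝ → ℝ)
    (η : ℝ) : ℝ :=
  Real.exp (-(∫ v in r0..η,
    (2 * c.a * v * (N2 f2 v / L2 f2 v)
      + c.D2 / Hf c s0 r0 L1 N1 K1 L2 N2 K2 f1 f2 * (K2 f2 v / (L2 f2 v * v ^ c.nu)))))

/-- `Φ2(η; f1,f2)`. -/
def Phi2f (c : Cst) (s0 r0 : ℝ) (L1 N1 K1 L2 N2 K2 : (ℝ → ℝ) → ℝ → ℝ) (f1 f2 : ℝ → ℝ)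
    (η : ℝ) : ℝ :=
  ∫ v in r0..η, E2f c s0 r0 L1 N1 K1 L2 N2 K2 f1 f2 v / (L2 f2 v * v ^ c.nu)

/-- `Φ2(∞; f1,f2)`. -/
def Phi2I (c : Cst) (s0 r0 : ℝ) (L1 N1 K1 L2 N2 K2 : (ℝ → ℝ) → ℝ → ℝ) (f1 f2 : ℝ → ℝ) : ℝ :=
  ∫ v in Set.Ioi r0, E2f c s0 r0 L1 N1 K1 L2 N2 K2 f1 f2 v / (L2 f2 v * v ^ c.nu)

/-- `H2(η; f1,f2)`. -/
def H2f (c : Cst) (s0 r0 : ℝ) (L1 N1 K1 L2 N2 K2 : (ℝ → ℝ) → ℝ → ℝ) (f1 f2 : ℝ → ℝ)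
    (η : ℝ) : ℝ :=
  ∫ v in r0..η, K2 f2 v / (v ^ c.nu * E2f c s0 r0 L1 N1 K1 L2 N2 K2 f1 f2 v)

/-- `G2(η; f1,f2)`. -/
def G2f (c : Cst) (s0 r0 : ℝ) (L1 N1 K1 L2 N2 K2 : (ℝ → ℝ) → ℝ → ℝ) (f1 f2 : ℝ → ℝ)
    (η : ℝ) : ℝ :=
  ∫ v in r0..η, E2f c s0 r0 L1 N1 K1 L2 N2 K2 f1 f2 v
    * H2f c s0 r0 L1 N1 K1 L2 N2 K2 f1 f2 v / (L2 f2 v * v ^ c.nu)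

/-- `G2(∞; f1,f2) = lim_{η→∞} G2(η; f1,f2)`. -/
def G2I (c : Cst) (s0 r0 : ℝ) (L1 N1 K1 L2 N2 K2 : (ℝ → ℝ) → ℝ → ℝ) (f1 f2 : ℝ → ℝ) : ℝ :=
  limUnder atTop (G2f c s0 r0 L1 N1 K1 L2 N2 K2 f1 f2)

/-- `V2(f1,f2)(η)`. -/
def V2f (c : Cst) (s0 r0 : ℝ) (L1 N1 K1 L2 N2 K2 : (ℝ → ℝ) → ℝ → ℝ) (f1 f2 : ℝ → ℝ)
    (η : ℝ) : ℝ :=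
  (c.D2s / Hf c s0 r0 L1 N1 K1 L2 N2 K2 f1 f2 ^ 2 * G2I c s0 r0 L1 N1 K1 L2 N2 K2 f1 f2 - 1)
      * (Phi2f c s0 r0 L1 N1 K1 L2 N2 K2 f1 f2 η / Phi2I c s0 r0 L1 N1 K1 L2 N2 K2 f1 f2)
    - c.D2s / Hf c s0 r0 L1 N1 K1 L2 N2 K2 f1 f2 ^ 2 * G2f c s0 r0 L1 N1 K1 L2 N2 K2 f1 f2 η

/-! Constants appearing in the estimates. -/

def Hinf (c : Cst) (s0 r0 : ℝ) : ℝ :=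
  c.K1m / (c.mu + c.nu - 1) * (s0 ^ (-(c.mu + c.nu - 1)) - r0 ^ (-(c.mu + c.nu - 1)))

def Hsup (c : Cst) (s0 r0 : ℝ) : ℝ :=
  (c.K1M * s0 ^ (-(c.mu + c.nu - 1)) + c.K2M * r0 ^ (-(c.mu + c.nu - 1))) / (c.mu + c.nu - 1)

def Htil (c : Cst) (s0 r0 : ℝ) : ℝ :=
  (c.Kt1 * s0 ^ (-(c.mu + c.nu - 1)) + c.Kt2 * r0 ^ (-(c.mu + c.nu - 1))) / (c.mu + c.nu - 1)

/-- Limit of `Hinf` as `r0 → ∞`. -/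
def HinfI (c : Cst) (s0 : ℝ) : ℝ := c.K1m / (c.mu + c.nu - 1) * s0 ^ (-(c.mu + c.nu - 1))

/-- Limit of `Hsup` as `r0 → ∞`. -/
def HsupI (c : Cst) (s0 : ℝ) : ℝ := c.K1M * s0 ^ (-(c.mu + c.nu - 1)) / (c.mu + c.nu - 1)

/-- Limit of `Htil` as `r0 → ∞`. -/
def HtilI (c : Cst) (s0 : ℝ) : ℝ := c.Kt1 * s0 ^ (-(c.mu + c.nu - 1)) / (c.mu + c.nu - 1)

/-- `E1inf` as a function of the value `h` of `Hinf`. -/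
def E1infG (c : Cst) (s0 h : ℝ) : ℝ :=
  Real.exp (-(c.a * c.N1M / (c.L1m * (c.mu - 1) * s0 ^ (2 * c.mu - 2))
    + c.D1 * c.K1M / (h * c.L1m * (2 * c.mu + c.nu - 1) * s0 ^ (2 * c.mu + c.nu - 1))))

/-- `Ẽ1` as a function of the values `h` of `Hinf` and `ht` of `Htil`. -/
def E1tilG (c : Cst) (s0 h ht : ℝ) : ℝ :=
  2 * c.a * (c.Nt1 / (c.L1m * (c.mu - 2) * s0 ^ (c.mu - 2))
      + c.N1M * c.Lt1 / (c.L1m ^ 2 * (3 * c.mu - 2) * s0 ^ (3 * c.mu - 2)))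
    + c.D1 * (c.Kt1 / (h * c.L1m * (2 * c.mu + c.nu - 1) * s0 ^ (2 * c.mu + c.nu - 1))
      + c.K1M / (h * c.L1m)
        * (ht / (h * (2 * c.mu + c.nu - 1) * s0 ^ (2 * c.mu + c.nu - 1))
          + c.Lt1 / (c.L1m * (3 * c.mu + c.nu - 1) * s0 ^ (3 * c.mu + c.nu - 1))))

def Phi1tilG (c : Cst) (s0 h ht : ℝ) : ℝ :=
  E1tilG c s0 h ht / (c.L1m * (c.mu + c.nu - 1) * s0 ^ (c.mu + c.nu - 1))
    + c.Lt1 / (c.L1m ^ 2 * (2 * c.mu + c.nu - 1) * s0 ^ (2 * c.mu + c.nu - 1))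

def H1supG (c : Cst) (s0 h : ℝ) : ℝ :=
  c.K1M / (E1infG c s0 h * (c.mu + c.nu - 1) * s0 ^ (c.mu + c.nu - 1))

def H1tilG (c : Cst) (s0 h ht : ℝ) : ℝ :=
  (c.Kt1 + c.K1M * E1tilG c s0 h ht / E1infG c s0 h)
    / (E1infG c s0 h * (c.mu + c.nu - 1) * s0 ^ (c.mu + c.nu - 1))

def G1supG (c : Cst) (s0 h : ℝ) : ℝ :=
  H1supG c s0 h / (c.L1m * (c.mu + c.nu - 1) * s0 ^ (c.mu + c.nu - 1))

def G1tilG (c : Cst) (s0 h ht : ℝ) : ℝ :=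
  H1supG c s0 h * Phi1tilG c s0 h ht
    + H1tilG c s0 h ht / (c.L1m * (c.mu + c.nu - 1) * s0 ^ (c.mu + c.nu - 1))

/-- `ε1` as a function of the values `h` of `Hinf`, `hs` of `Hsup`, `ht` of `Htil`. -/
def eps1G (c : Cst) (s0 h hs ht : ℝ) : ℝ :=
  2 * s0 ^ c.nu * c.Q * Real.exp (-s0 ^ 2) * Phi1tilG c s0 h ht
    + 2 * c.D1s * (2 * G1supG c s0 h * hs * ht / h ^ 4 + G1tilG c s0 h ht / h ^ 2)

def E1inf (c : Cst) (s0 r0 : ℝ) : ℝ := E1infG c s0 (Hinf c s0 r0)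
def E1til (c : Cst) (s0 r0 : ℝ) : ℝ := E1tilG c s0 (Hinf c s0 r0) (Htil c s0 r0)
def Phi1til (c : Cst) (s0 r0 : ℝ) : ℝ := Phi1tilG c s0 (Hinf c s0 r0) (Htil c s0 r0)
def H1sup (c : Cst) (s0 r0 : ℝ) : ℝ := H1supG c s0 (Hinf c s0 r0)
def H1til (c : Cst) (s0 r0 : ℝ) : ℝ := H1tilG c s0 (Hinf c s0 r0) (Htil c s0 r0)
def G1sup (c : Cst) (s0 r0 : ℝ) : ℝ := G1supG c s0 (Hinf c s0 r0)
def G1til (c : Cst) (s0 r0 : ℝ) : ℝ := G1tilG c s0 (Hinf c s0 r0) (Htil c s0 r0)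
def eps1 (c : Cst) (s0 r0 : ℝ) : ℝ := eps1G c s0 (Hinf c s0 r0) (Hsup c s0 r0) (Htil c s0 r0)

/-- `j1(s0) = lim_{r0→∞} ε1(r0,s0)`: the same expression with `Hinf, Hsup, Htil`
replaced by their limits as `r0 → ∞`. -/
def j1 (c : Cst) (s0 : ℝ) : ℝ := eps1G c s0 (HinfI c s0) (HsupI c s0) (HtilI c s0)

def E2inf (c : Cst) (s0 r0 : ℝ) : ℝ :=
  Real.exp (-(c.a * c.N2M / (c.L2m * (c.mu - 1) * r0 ^ (2 * c.mu - 2))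
    + c.D2 * c.K2M / (Hinf c s0 r0 * c.L2m * (2 * c.mu + c.nu - 1) * r0 ^ (2 * c.mu + c.nu - 1))))

def E2til (c : Cst) (s0 r0 : ℝ) : ℝ :=
  2 * c.a * (c.Nt2 / (c.L2m * (c.mu - 2) * r0 ^ (c.mu - 2))
      + c.N2M * c.Lt2 / (c.L2m ^ 2 * (3 * c.mu - 2) * r0 ^ (3 * c.mu - 2)))
    + c.D2 * (c.Kt2 / (Hinf c s0 r0 * c.L2m * (2 * c.mu + c.nu - 1) * r0 ^ (2 * c.mu + c.nu - 1))
      + c.K2M / (Hinf c s0 r0 * c.L2m)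
        * (Htil c s0 r0 / (Hinf c s0 r0 * (2 * c.mu + c.nu - 1) * r0 ^ (2 * c.mu + c.nu - 1))
          + c.Lt2 / (c.L2m * (3 * c.mu + c.nu - 1) * r0 ^ (3 * c.mu + c.nu - 1))))

def Phi2til (c : Cst) (s0 r0 : ℝ) : ℝ :=
  E2til c s0 r0 / (c.L2m * (c.mu + c.nu - 1) * r0 ^ (c.mu + c.nu - 1))
    + c.Lt2 / (c.L2m ^ 2 * (2 * c.mu + c.nu - 1) * r0 ^ (2 * c.mu + c.nu - 1))

/-- `Φ2inf(∞)(r0,s0)`. -/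
def Phi2infC (c : Cst) (s0 r0 : ℝ) : ℝ :=
  E2inf c s0 r0 / (c.L2M * (c.mu + c.nu - 1) * r0 ^ (c.mu + c.nu - 1))

/-- `Φ2sup(r0)`. -/
def Phi2supC (c : Cst) (r0 : ℝ) : ℝ := 1 / (c.L2m * (c.mu + c.nu - 1) * r0 ^ (c.mu + c.nu - 1))

def H2sup (c : Cst) (s0 r0 : ℝ) : ℝ :=
  c.K2M / (E2inf c s0 r0 * (c.mu + c.nu - 1) * r0 ^ (c.mu + c.nu - 1))

def H2til (c : Cst) (s0 r0 : ℝ) : ℝ :=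
  (c.Kt2 + c.K2M * E2til c s0 r0 / E2inf c s0 r0)
    / (E2inf c s0 r0 * (c.mu + c.nu - 1) * r0 ^ (c.mu + c.nu - 1))

def G2sup (c : Cst) (s0 r0 : ℝ) : ℝ :=
  H2sup c s0 r0 / (c.L2m * (c.mu + c.nu - 1) * r0 ^ (c.mu + c.nu - 1))

def G2til (c : Cst) (s0 r0 : ℝ) : ℝ :=
  H2sup c s0 r0 * Phi2til c s0 r0
    + H2til c s0 r0 / (c.L2m * (c.mu + c.nu - 1) * r0 ^ (c.mu + c.nu - 1))

def eps21 (c : Cst) (s0 r0 : ℝ) : ℝ := 2 * Phi2til c s0 r0 / Phi2infC c s0 r0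

def eps22 (c : Cst) (s0 r0 : ℝ) : ℝ :=
  G2til c s0 r0 / Hinf c s0 r0 ^ 2
    + 2 * G2sup c s0 r0 * Hsup c s0 r0 * Htil c s0 r0 / Hinf c s0 r0 ^ 4

def eps23 (c : Cst) (s0 r0 : ℝ) : ℝ :=
  Phi2supC c r0 / Phi2infC c s0 r0 * eps22 c s0 r0
    + G2sup c s0 r0 / Hinf c s0 r0 ^ 2 * eps21 c s0 r0

def eps2 (c : Cst) (s0 r0 : ℝ) : ℝ := eps21 c s0 r0 + eps22 c s0 r0 + eps23 c s0 r0


open MeasureTheory Filter Topology intervalIntegral Set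

section Helpers

lemma rpow_int_eq {a b p : ℝ} (ha : 0 < a) (hab : a ≤ b) (hp : 1 < p) :
    ∫ x in a..b, x ^ (-p) = (a ^ (-(p-1)) - b ^ (-(p-1))) / (p-1) := by
  rw [integral_rpow (Or.inr ⟨fun h => by simp [show p = 1 by linarith [neg_eq_iff_eq_neg.1 h]] at hp,
    by rw [Set.uIcc_of_le hab]; exact fun h => absurd h.1 (not_le.2 ha)⟩)]
  have h1 : -p + 1 = -(p-1) := by ring
  rw [h1]
  have h2 : p - 1 ≠ 0 := by linarith
  have h3 : 1 - p ≠ 0 := by linarith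
  field_simp
  ring

lemma rpow_int_le {a b p : ℝ} (ha : 0 < a) (hab : a ≤ b) (hp : 1 < p) :
    ∫ x in a..b, x ^ (-p) ≤ 1 / ((p-1) * a ^ (p-1)) := by
  rw [rpow_int_eq ha hab hp]
  have hb : (0:ℝ) < b ^ (-(p-1)) := Real.rpow_pos_of_pos (lt_of_lt_of_le ha hab) _
  have h1 : a ^ (-(p-1)) = 1 / a ^ (p-1) := by
    rw [Real.rpow_neg ha.le]; exact inv_eq_one_div _
  have hap : (0:ℝ) < a ^ (p-1) := Real.rpow_pos_of_pos ha _
  have hp1 : (0:ℝ) < p - 1 := by linarith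
  rw [div_le_div_iff₀ hp1 (by positivity), h1]
  have h5 : (1 / a ^ (p-1) - b ^ (-(p-1))) ≤ 1 / a ^ (p-1) := by linarith
  calc (1 / a ^ (p-1) - b ^ (-(p-1))) * ((p-1) * a ^ (p-1))
      ≤ 1 / a ^ (p-1) * ((p-1) * a ^ (p-1)) := by
        apply mul_le_mul_of_nonneg_right h5 (by positivity)
    _ = 1 * (p-1) := by field_simp

lemma int_term_le {a b C p : ℝ} (ha : 0 < a) (hab : a ≤ b) (hp : 1 < p) (hC : 0 ≤ C) :
    ∫ x in a..b, C * x ^ (-p) ≤ C / ((p-1) * a ^ (p-1)) := by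
  rw [intervalIntegral.integral_const_mul]
  calc C * ∫ x in a..b, x ^ (-p) ≤ C * (1 / ((p-1) * a ^ (p-1))) :=
        mul_le_mul_of_nonneg_left (rpow_int_le ha hab hp) hC
    _ = C / ((p-1) * a ^ (p-1)) := by ring

lemma intble_rpow {a b p : ℝ} (ha : 0 < a) (hab : a ≤ b) (C : ℝ) :
    IntervalIntegrable (fun x => C * x ^ (-p)) volume a b := by
  apply ContinuousOn.intervalIntegrable
  apply ContinuousOn.mul continuousOn_const
  apply ContinuousOn.rpow_const continuousOn_id
  intro x hx
  rw [Set.uIcc_of_le hab] at hx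
  exact Or.inl (ne_of_gt (lt_of_lt_of_le ha hx.1))

lemma abs_int_le {f g : ℝ → ℝ} {a b : ℝ} (hab : a ≤ b)
    (hf : IntervalIntegrable f volume a b) (hg : IntervalIntegrable g volume a b)
    (h : ∀ v ∈ Set.Icc a b, |f v| ≤ g v) :
    |∫ v in a..b, f v| ≤ ∫ v in a..b, g v :=
  (intervalIntegral.abs_integral_le_integral_abs hab).trans <|
    intervalIntegral.integral_mono_on hab hf.abs hg (fun x hx => h x hx)

lemma II_of_contOn {s0 r0 η : ℝ} {f : ℝ → ℝ} (hη : η ∈ Set.Icc s0 r0)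
    (hf : ContinuousOn f (Set.Icc s0 r0)) : IntervalIntegrable f volume s0 η := by
  apply ContinuousOn.intervalIntegrable
  rw [Set.uIcc_of_le hη.1]
  exact hf.mono (Set.Icc_subset_Icc le_rfl hη.2)

lemma supOn_nonneg (S : Set ℝ) (f : ℝ → ℝ) : 0 ≤ supOn S f :=
  Real.iSup_nonneg (fun x => abs_nonneg _)

lemma pairNorm_nonneg (s0 r0 : ℝ) (f1 f2 g1 g2 : ℝ → ℝ) : 0 ≤ pairNorm s0 r0 f1 f2 g1 g2 :=
  le_trans (supOn_nonneg _ _) (le_max_left _ _)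

lemma intble_Ioi_rpow {r0 p : ℝ} (C : ℝ) (hr0 : 0 < r0) (hp : 1 < p) :
    IntegrableOn (fun v => C * v ^ (-p)) (Set.Ioi r0) :=
  (integrableOn_Ioi_rpow_of_lt (by linarith : -p < -1) hr0).const_mul C

lemma int_Ioi_rpow_le {r0 C p : ℝ} (hr0 : 0 < r0) (hp : 1 < p) (hC : 0 ≤ C) :
    ∫ v in Set.Ioi r0, C * v ^ (-p) ≤ C / ((p-1) * r0 ^ (p-1)) := by
  rw [MeasureTheory.integral_const_mul, integral_Ioi_rpow_of_lt (by linarith : -p < -1) hr0]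
  have h1 : -r0 ^ (-p + 1) / (-p + 1) = 1 / ((p-1) * r0 ^ (p-1)) := by
    rw [show -p + 1 = -(p-1) by ring, show -r0 ^ (-(p-1)) / -(p-1) = r0 ^ (-(p-1)) / (p-1) from
      neg_div_neg_eq _ _, Real.rpow_neg hr0.le]
    have h2 : (0:ℝ) < r0 ^ (p-1) := Real.rpow_pos_of_pos hr0 _
    rw [div_eq_div_iff (by linarith : p - 1 ≠ 0) (ne_of_gt (mul_pos (by linarith : (0:ℝ) < p - 1) h2))]
    field_simp
  rw [h1, mul_one_div]

lemma intble_Ioi_of_bound {r0 C p : ℝ} {g : ℝ → ℝ} (hr0 : 0 < r0) (hp : 1 < p)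
    (cont : ContinuousOn g (Set.Ici r0)) (bound : ∀ v ∈ Set.Ioi r0, |g v| ≤ C * v ^ (-p)) :
    IntegrableOn g (Set.Ioi r0) := by
  apply Integrable.mono' (intble_Ioi_rpow C hr0 hp)
    ((cont.mono Set.Ioi_subset_Ici_self).aestronglyMeasurable measurableSet_Ioi)
  filter_upwards [ae_restrict_mem measurableSet_Ioi] with v hv
  simpa [Real.norm_eq_abs] using bound v hv

lemma exp_neg_lip {x y : ℝ} (hx : 0 ≤ x) (hy : 0 ≤ y) :
    |Real.exp (-x) - Real.exp (-y)| ≤ |x - y| := by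
  have key : ∀ u v : ℝ, 0 ≤ u → u ≤ v → Real.exp (-u) - Real.exp (-v) ≤ v - u := by
    intro u v hu huv
    have h1 : (u - v) + 1 ≤ Real.exp (u - v) := Real.add_one_le_exp _
    have h2 : Real.exp (-u) ≤ 1 := Real.exp_le_one_iff.2 (by linarith)
    have h3 : Real.exp (-u) * Real.exp (u - v) = Real.exp (-v) := by
      rw [← Real.exp_add]; ring_nf
    have h4 : (0:ℝ) < Real.exp (-u) := Real.exp_pos _
    nlinarith
  rcases le_total x y with h | h
  · have h5 : Real.exp (-y) ≤ Real.exp (-x) := Real.exp_le_exp.2 (by linarith)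
    rw [abs_of_nonneg (by linarith), abs_of_nonpos (by linarith)]
    have := key x y hx h; linarith
  · have h5 : Real.exp (-x) ≤ Real.exp (-y) := Real.exp_le_exp.2 (by linarith)
    rw [abs_of_nonpos (by linarith), abs_of_nonneg (by linarith)]
    have := key y x hy h; linarith

lemma div_diff_bound {A B C D : ℝ} (hB : 0 < B) (hD : 0 < D) (hC : 0 ≤ C) :
    |A / B - C / D| ≤ |A - C| / B + C * |B - D| / (B * D) := by
  have h1 : A / B - C / D = (A - C) / B + C * (D - B) / (B * D) := by
    field_simp; ring
  rw [h1]
  refine (abs_add_le _ _).trans ?_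
  gcongr
  · rw [abs_div, abs_of_pos hB]
  · rw [abs_div, abs_of_pos (mul_pos hB hD), abs_mul, abs_of_nonneg hC, abs_sub_comm]

end Helpers

section HfLemmas

variable {c : Cst} {s0 r0 : ℝ} {L1 N1 K1 L2 N2 K2 : (ℝ → ℝ) → ℝ → ℝ} {f1 f2 g1 g2 : ℝ → ℝ}

lemma cont_div_rpow {s0 r0 p : ℝ} {F : ℝ → ℝ} (hs0 : 0 < s0)
    (hF : ContinuousOn F (Set.Icc s0 r0)) :
    ContinuousOn (fun v => F v / v ^ p) (Set.Icc s0 r0) := by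
  apply hF.div
  · exact (continuousOn_id.rpow_const (fun x hx => Or.inl (ne_of_gt (lt_of_lt_of_le hs0 hx.1))))
  · exact fun x hx => ne_of_gt (Real.rpow_pos_of_pos (lt_of_lt_of_le hs0 hx.1) _)

lemma cont_div_rpow_Ici {r0 p : ℝ} {F : ℝ → ℝ} (hr0 : 0 < r0)
    (hF : ContinuousOn F (Set.Ici r0)) :
    ContinuousOn (fun v => F v / v ^ p) (Set.Ici r0) := by
  apply hF.div
  · exact (continuousOn_id.rpow_const (fun x hx => Or.inl (ne_of_gt (lt_of_lt_of_le hr0 hx))))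
  · exact fun x hx => ne_of_gt (Real.rpow_pos_of_pos (lt_of_lt_of_le hr0 hx) _)

lemma Hinf_pos (hs0 : 0 < s0) (hsr : s0 < r0) (hmu : 2 < c.mu) (hnu0 : 0 < c.nu)
    (hK1m : 0 < c.K1m) : 0 < Hinf c s0 r0 := by
  have hq : 0 < c.mu + c.nu - 1 := by linarith
  have h1 : r0 ^ (-(c.mu + c.nu - 1)) < s0 ^ (-(c.mu + c.nu - 1)) :=
    Real.rpow_lt_rpow_of_neg hs0 hsr (by linarith)
  have : 0 < c.K1m / (c.mu + c.nu - 1) := by positivity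
  unfold Hinf
  nlinarith

lemma Hf_ge_Hinf (hs0 : 0 < s0) (hsr : s0 < r0) (hmu : 2 < c.mu) (hnu0 : 0 < c.nu)
    (hK1m : 0 < c.K1m) (hK2m : 0 < c.K2m)
    (hKc : ContinuousOn (K1 f1) (Set.Icc s0 r0))
    (hK1b : ∀ v ∈ Set.Icc s0 r0, c.K1m * v ^ (-c.mu) ≤ K1 f1 v)
    (hK2b : ∀ v ∈ Set.Ici r0, c.K2m * v ^ (-c.mu) ≤ K2 f2 v) :
    Hinf c s0 r0 ≤ Hf c s0 r0 L1 N1 K1 L2 N2 K2 f1 f2 := by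
  have hq : 1 < c.mu + c.nu := by linarith
  have h1 : ∫ v in s0..r0, c.K1m * v ^ (-(c.mu + c.nu)) ≤ ∫ v in s0..r0, K1 f1 v / v ^ c.nu := by
    apply intervalIntegral.integral_mono_on hsr.le (intble_rpow hs0 hsr.le _)
      (II_of_contOn (Set.mem_Icc.2 ⟨hsr.le, le_rfl⟩) (cont_div_rpow hs0 hKc))
    intro v hv
    have hv0 : 0 < v := lt_of_lt_of_le hs0 hv.1
    have hvν : 0 < v ^ c.nu := Real.rpow_pos_of_pos hv0 _
    rw [le_div_iff₀ hvν]
    have : v ^ (-(c.mu + c.nu)) * v ^ c.nu = v ^ (-c.mu) := by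
      rw [← Real.rpow_add hv0]; ring_nf
    rw [mul_assoc, this]
    exact hK1b v hv
  have h2 : (0:ℝ) ≤ ∫ v in Set.Ioi r0, K2 f2 v / v ^ c.nu := by
    apply MeasureTheory.setIntegral_nonneg measurableSet_Ioi
    intro v hv
    have hv0 : 0 < v := lt_trans (lt_trans hs0 hsr) hv
    apply div_nonneg _ (Real.rpow_nonneg hv0.le _)
    exact le_trans (by positivity) (hK2b v (Set.Ioi_subset_Ici_self hv))
  have h3 : ∫ v in s0..r0, c.K1m * v ^ (-(c.mu + c.nu)) = Hinf c s0 r0 := by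
    rw [intervalIntegral.integral_const_mul, rpow_int_eq hs0 hsr.le hq]
    unfold Hinf
    field_simp
  unfold Hf
  linarith

lemma Hf_lip (hs0 : 0 < s0) (hsr : s0 < r0) (hmu : 2 < c.mu) (hnu0 : 0 < c.nu)
    (hKt1 : 0 < c.Kt1) (hKt2 : 0 < c.Kt2) (hK2m : 0 < c.K2m) (hK2M : 0 < c.K2M)
    (hKcf : ContinuousOn (K1 f1) (Set.Icc s0 r0)) (hKcg : ContinuousOn (K1 g1) (Set.Icc s0 r0))
    (hK2cf : ContinuousOn (K2 f2) (Set.Ici r0)) (hK2cg : ContinuousOn (K2 g2) (Set.Ici r0))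
    (hK2bf : ∀ v ∈ Set.Ici r0, c.K2m * v ^ (-c.mu) ≤ K2 f2 v ∧ K2 f2 v ≤ c.K2M * v ^ (-c.mu))
    (hK2bg : ∀ v ∈ Set.Ici r0, c.K2m * v ^ (-c.mu) ≤ K2 g2 v ∧ K2 g2 v ≤ c.K2M * v ^ (-c.mu))
    (hlip1 : ∀ v ∈ Set.Icc s0 r0,
      |K1 f1 v - K1 g1 v| ≤ c.Kt1 * v ^ (-c.mu) * supOn (Set.Icc s0 r0) (f1 - g1))
    (hlip2 : ∀ v ∈ Set.Ici r0,
      |K2 f2 v - K2 g2 v| ≤ c.Kt2 * v ^ (-c.mu) * supOn (Set.Ici r0) (f2 - g2)) :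
    |Hf c s0 r0 L1 N1 K1 L2 N2 K2 f1 f2 - Hf c s0 r0 L1 N1 K1 L2 N2 K2 g1 g2|
      ≤ Htil c s0 r0 * pairNorm s0 r0 f1 f2 g1 g2 := by
  have hr0 : 0 < r0 := lt_trans hs0 hsr
  have hq : 1 < c.mu + c.nu := by linarith
  have hq1 : 0 < c.mu + c.nu - 1 := by linarith
  set S1 := supOn (Set.Icc s0 r0) (f1 - g1) with hS1
  set S2 := supOn (Set.Ici r0) (f2 - g2) with hS2
  have hS1n : 0 ≤ S1 := supOn_nonneg _ _
  have hS2n : 0 ≤ S2 := supOn_nonneg _ _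
  set P := pairNorm s0 r0 f1 f2 g1 g2 with hP
  have hS1P : S1 ≤ P := le_max_left _ _
  have hS2P : S2 ≤ P := le_max_right _ _
  have hPn : 0 ≤ P := le_trans hS1n hS1P
  -- Part A
  have hA : |(∫ v in s0..r0, K1 f1 v / v ^ c.nu) - ∫ v in s0..r0, K1 g1 v / v ^ c.nu|
      ≤ (c.Kt1 * S1) / ((c.mu + c.nu - 1) * s0 ^ (c.mu + c.nu - 1)) := by
    rw [← intervalIntegral.integral_sub
      (II_of_contOn (Set.mem_Icc.2 ⟨hsr.le, le_rfl⟩) (cont_div_rpow hs0 hKcf))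
      (II_of_contOn (Set.mem_Icc.2 ⟨hsr.le, le_rfl⟩) (cont_div_rpow hs0 hKcg))]
    have hint : IntervalIntegrable (fun v => K1 f1 v / v ^ c.nu - K1 g1 v / v ^ c.nu)
        volume s0 r0 :=
      II_of_contOn (Set.mem_Icc.2 ⟨hsr.le, le_rfl⟩)
        ((cont_div_rpow hs0 hKcf).sub (cont_div_rpow hs0 hKcg))
    have hpw : ∀ v ∈ Set.Icc s0 r0, |K1 f1 v / v ^ c.nu - K1 g1 v / v ^ c.nu|
        ≤ (c.Kt1 * S1) * v ^ (-(c.mu + c.nu)) := by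
      intro v hv
      have hv0 : 0 < v := lt_of_lt_of_le hs0 hv.1
      have hvν : 0 < v ^ c.nu := Real.rpow_pos_of_pos hv0 _
      have h1 : K1 f1 v / v ^ c.nu - K1 g1 v / v ^ c.nu = (K1 f1 v - K1 g1 v) / v ^ c.nu := by
        ring
      rw [h1, abs_div, abs_of_pos hvν, div_le_iff₀ hvν]
      have h2 : v ^ (-(c.mu + c.nu)) * v ^ c.nu = v ^ (-c.mu) := by
        rw [← Real.rpow_add hv0]; ring_nf
      calc |K1 f1 v - K1 g1 v| ≤ c.Kt1 * v ^ (-c.mu) * S1 := hlip1 v hv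
        _ = c.Kt1 * S1 * (v ^ (-(c.mu + c.nu))) * v ^ c.nu := by
            rw [mul_assoc (c.Kt1 * S1) _ (v ^ c.nu), h2]; ring
    calc |∫ v in s0..r0, (K1 f1 v / v ^ c.nu - K1 g1 v / v ^ c.nu)|
        ≤ ∫ v in s0..r0, (c.Kt1 * S1) * v ^ (-(c.mu + c.nu)) :=
          abs_int_le hsr.le hint (intble_rpow hs0 hsr.le _) hpw
      _ ≤ (c.Kt1 * S1) / ((c.mu + c.nu - 1) * s0 ^ (c.mu + c.nu - 1)) :=
          int_term_le hs0 hsr.le hq (by positivity)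
  -- Part B
  have hbf : ∀ v ∈ Set.Ioi r0, |K2 f2 v / v ^ c.nu| ≤ c.K2M * v ^ (-(c.mu + c.nu)) := by
    intro v hv
    have hv0 : 0 < v := lt_trans hr0 hv
    have hvν : 0 < v ^ c.nu := Real.rpow_pos_of_pos hv0 _
    have h2 : v ^ (-(c.mu + c.nu)) * v ^ c.nu = v ^ (-c.mu) := by
      rw [← Real.rpow_add hv0]; ring_nf
    rw [abs_div, abs_of_pos hvν, div_le_iff₀ hvν, mul_assoc, h2]
    rw [abs_of_nonneg (le_trans (by positivity) (hK2bf v (Set.Ioi_subset_Ici_self hv)).1)]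
    exact (hK2bf v (Set.Ioi_subset_Ici_self hv)).2
  have hbg : ∀ v ∈ Set.Ioi r0, |K2 g2 v / v ^ c.nu| ≤ c.K2M * v ^ (-(c.mu + c.nu)) := by
    intro v hv
    have hv0 : 0 < v := lt_trans hr0 hv
    have hvν : 0 < v ^ c.nu := Real.rpow_pos_of_pos hv0 _
    have h2 : v ^ (-(c.mu + c.nu)) * v ^ c.nu = v ^ (-c.mu) := by
      rw [← Real.rpow_add hv0]; ring_nf
    rw [abs_div, abs_of_pos hvν, div_le_iff₀ hvν, mul_assoc, h2]
    rw [abs_of_nonneg (le_trans (by positivity) (hK2bg v (Set.Ioi_subset_Ici_self hv)).1)]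
    exact (hK2bg v (Set.Ioi_subset_Ici_self hv)).2
  have hif : IntegrableOn (fun v => K2 f2 v / v ^ c.nu) (Set.Ioi r0) :=
    intble_Ioi_of_bound hr0 hq (cont_div_rpow_Ici hr0 hK2cf) hbf
  have hig : IntegrableOn (fun v => K2 g2 v / v ^ c.nu) (Set.Ioi r0) :=
    intble_Ioi_of_bound hr0 hq (cont_div_rpow_Ici hr0 hK2cg) hbg
  have hB : |(∫ v in Set.Ioi r0, K2 f2 v / v ^ c.nu) - ∫ v in Set.Ioi r0, K2 g2 v / v ^ c.nu|
      ≤ (c.Kt2 * S2) / ((c.mu + c.nu - 1) * r0 ^ (c.mu + c.nu - 1)) := by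
    rw [← MeasureTheory.integral_sub hif hig]
    have key : ∀ v ∈ Set.Ioi r0,
        |K2 f2 v / v ^ c.nu - K2 g2 v / v ^ c.nu| ≤ (c.Kt2 * S2) * v ^ (-(c.mu + c.nu)) := by
      intro v hv
      have hv0 : 0 < v := lt_trans hr0 hv
      have hvν : 0 < v ^ c.nu := Real.rpow_pos_of_pos hv0 _
      have h2 : v ^ (-(c.mu + c.nu)) * v ^ c.nu = v ^ (-c.mu) := by
        rw [← Real.rpow_add hv0]; ring_nf
      have h1 : K2 f2 v / v ^ c.nu - K2 g2 v / v ^ c.nu = (K2 f2 v - K2 g2 v) / v ^ c.nu := by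
        ring
      rw [h1, abs_div, abs_of_pos hvν, div_le_iff₀ hvν, mul_assoc, h2]
      calc |K2 f2 v - K2 g2 v| ≤ c.Kt2 * v ^ (-c.mu) * S2 := hlip2 v (Set.Ioi_subset_Ici_self hv)
        _ = c.Kt2 * S2 * v ^ (-c.mu) := by ring
    calc |∫ v in Set.Ioi r0, (K2 f2 v / v ^ c.nu - K2 g2 v / v ^ c.nu)|
        ≤ ∫ v in Set.Ioi r0, |K2 f2 v / v ^ c.nu - K2 g2 v / v ^ c.nu| := by
          simpa [Real.norm_eq_abs] using
            MeasureTheory.norm_integral_le_integral_norm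
              (μ := volume.restrict (Set.Ioi r0)) (f := fun v => K2 f2 v / v ^ c.nu - K2 g2 v / v ^ c.nu)
      _ ≤ ∫ v in Set.Ioi r0, (c.Kt2 * S2) * v ^ (-(c.mu + c.nu)) := by
          apply MeasureTheory.setIntegral_mono_on (hif.sub hig).abs
            (intble_Ioi_rpow _ hr0 hq) measurableSet_Ioi key
      _ ≤ (c.Kt2 * S2) / ((c.mu + c.nu - 1) * r0 ^ (c.mu + c.nu - 1)) :=
          int_Ioi_rpow_le hr0 hq (by positivity)
  -- combine
  have hds : (0:ℝ) < (c.mu + c.nu - 1) * s0 ^ (c.mu + c.nu - 1) :=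
    mul_pos hq1 (Real.rpow_pos_of_pos hs0 _)
  have hdr : (0:ℝ) < (c.mu + c.nu - 1) * r0 ^ (c.mu + c.nu - 1) :=
    mul_pos hq1 (Real.rpow_pos_of_pos hr0 _)
  have habs : |Hf c s0 r0 L1 N1 K1 L2 N2 K2 f1 f2 - Hf c s0 r0 L1 N1 K1 L2 N2 K2 g1 g2|
      ≤ (c.Kt1 * S1) / ((c.mu + c.nu - 1) * s0 ^ (c.mu + c.nu - 1))
        + (c.Kt2 * S2) / ((c.mu + c.nu - 1) * r0 ^ (c.mu + c.nu - 1)) := by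
    unfold Hf
    have h0 : ((∫ v in s0..r0, K1 f1 v / v ^ c.nu) + ∫ v in Set.Ioi r0, K2 f2 v / v ^ c.nu)
        - ((∫ v in s0..r0, K1 g1 v / v ^ c.nu) + ∫ v in Set.Ioi r0, K2 g2 v / v ^ c.nu)
        = ((∫ v in s0..r0, K1 f1 v / v ^ c.nu) - ∫ v in s0..r0, K1 g1 v / v ^ c.nu)
          + ((∫ v in Set.Ioi r0, K2 f2 v / v ^ c.nu) - ∫ v in Set.Ioi r0, K2 g2 v / v ^ c.nu) := by
      ring
    rw [h0]
    exact le_trans (abs_add_le _ _) (add_le_add hA hB)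
  have e1 : Htil c s0 r0 = c.Kt1 / ((c.mu + c.nu - 1) * s0 ^ (c.mu + c.nu - 1))
      + c.Kt2 / ((c.mu + c.nu - 1) * r0 ^ (c.mu + c.nu - 1)) := by
    unfold Htil
    rw [Real.rpow_neg hs0.le, Real.rpow_neg hr0.le]
    have h2 : (0:ℝ) < s0 ^ (c.mu + c.nu - 1) := Real.rpow_pos_of_pos hs0 _
    have h3 : (0:ℝ) < r0 ^ (c.mu + c.nu - 1) := Real.rpow_pos_of_pos hr0 _
    field_simp
  refine habs.trans ?_
  rw [e1, add_mul, div_mul_eq_mul_div, div_mul_eq_mul_div]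
  exact add_le_add
    (div_le_div₀ (mul_nonneg hKt1.le hPn) (mul_le_mul_of_nonneg_left hS1P hKt1.le) hds le_rfl)
    (div_le_div₀ (mul_nonneg hKt2.le hPn) (mul_le_mul_of_nonneg_left hS2P hKt2.le) hdr le_rfl)

end HfLemmas

section E1Lemmas

/-- Bundle of facts used repeatedly (for one pair (f1,f2)). -/
structure Facts (c : Cst) (s0 r0 : ℝ) (L1 N1 K1 L2 N2 K2 : (ℝ → ℝ) → ℝ → ℝ)
    (f1 f2 : ℝ → ℝ) : Prop where
  hs0 : 0 < s0
  hsr : s0 < r0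
  hmu : 2 < c.mu
  hnu0 : 0 < c.nu
  hnu1 : c.nu < 1
  ha : 0 < c.a
  hD1 : 0 < c.D1
  hL1m : 0 < c.L1m
  hN1m : 0 < c.N1m
  hN1M : 0 < c.N1M
  hK1m : 0 < c.K1m
  hK1M : 0 < c.K1M
  hLc : ContinuousOn (L1 f1) (Set.Icc s0 r0)
  hNc : ContinuousOn (N1 f1) (Set.Icc s0 r0)
  hKc : ContinuousOn (K1 f1) (Set.Icc s0 r0)
  hLb : ∀ v ∈ Set.Icc s0 r0, c.L1m * v ^ c.mu ≤ L1 f1 v ∧ L1 f1 v ≤ c.L1M * v ^ c.mu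
  hNb : ∀ v ∈ Set.Icc s0 r0, c.N1m * v ^ (-c.mu) ≤ N1 f1 v ∧ N1 f1 v ≤ c.N1M * v ^ (-c.mu)
  hKb : ∀ v ∈ Set.Icc s0 r0, c.K1m * v ^ (-c.mu) ≤ K1 f1 v ∧ K1 f1 v ≤ c.K1M * v ^ (-c.mu)
  hHge : Hinf c s0 r0 ≤ Hf c s0 r0 L1 N1 K1 L2 N2 K2 f1 f2

/-- The integrand of `E1`. -/
def wfun (c : Cst) (s0 r0 : ℝ) (L1 N1 K1 L2 N2 K2 : (ℝ → ℝ) → ℝ → ℝ) (f1 f2 : ℝ → ℝ)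
    (v : ℝ) : ℝ :=
  2 * c.a * v * (N1 f1 v / L1 f1 v)
    + c.D1 / Hf c s0 r0 L1 N1 K1 L2 N2 K2 f1 f2 * (K1 f1 v / (L1 f1 v * v ^ c.nu))

/-- The constant in the exponent of `E1inf`. -/
def Xexp (c : Cst) (s0 r0 : ℝ) : ℝ :=
  c.a * c.N1M / (c.L1m * (c.mu - 1) * s0 ^ (2 * c.mu - 2))
    + c.D1 * c.K1M / (Hinf c s0 r0 * c.L1m * (2 * c.mu + c.nu - 1) * s0 ^ (2 * c.mu + c.nu - 1))

lemma E1inf_eq (c : Cst) (s0 r0 : ℝ) : E1inf c s0 r0 = Real.exp (-Xexp c s0 r0) := rfl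

variable {c : Cst} {s0 r0 : ℝ} {L1 N1 K1 L2 N2 K2 : (ℝ → ℝ) → ℝ → ℝ} {f1 f2 g1 g2 : ℝ → ℝ}

lemma E1f_eq (η : ℝ) : E1f c s0 r0 L1 N1 K1 L2 N2 K2 f1 f2 η
    = Real.exp (-(∫ v in s0..η, wfun c s0 r0 L1 N1 K1 L2 N2 K2 f1 f2 v)) := rfl

variable (hF : Facts c s0 r0 L1 N1 K1 L2 N2 K2 f1 f2)

include hF

lemma Facts.hr0 : 0 < r0 := lt_trans hF.hs0 hF.hsr

lemma Facts.hHpos : 0 < Hf c s0 r0 L1 N1 K1 L2 N2 K2 f1 f2 :=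
  lt_of_lt_of_le (Hinf_pos hF.hs0 hF.hsr hF.hmu hF.hnu0 hF.hK1m) hF.hHge

lemma Facts.hv0 {v : ℝ} (hv : v ∈ Set.Icc s0 r0) : 0 < v := lt_of_lt_of_le hF.hs0 hv.1

lemma Facts.hLpos {v : ℝ} (hv : v ∈ Set.Icc s0 r0) : 0 < L1 f1 v :=
  lt_of_lt_of_le (mul_pos hF.hL1m (Real.rpow_pos_of_pos (hF.hv0 hv) _)) ((hF.hLb v hv).1)

lemma Facts.hNpos {v : ℝ} (hv : v ∈ Set.Icc s0 r0) : 0 < N1 f1 v :=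
  lt_of_lt_of_le (mul_pos hF.hN1m (Real.rpow_pos_of_pos (hF.hv0 hv) _)) ((hF.hNb v hv).1)

lemma Facts.hKpos {v : ℝ} (hv : v ∈ Set.Icc s0 r0) : 0 < K1 f1 v :=
  lt_of_lt_of_le (mul_pos hF.hK1m (Real.rpow_pos_of_pos (hF.hv0 hv) _)) ((hF.hKb v hv).1)

end E1Lemmas

section E1Bounds

variable {c : Cst} {s0 r0 : ℝ} {L1 N1 K1 L2 N2 K2 : (ℝ → ℝ) → ℝ → ℝ} {f1 f2 : ℝ → ℝ}
variable (hF : Facts c s0 r0 L1 N1 K1 L2 N2 K2 f1 f2)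

include hF

lemma Facts.w_nonneg {v : ℝ} (hv : v ∈ Set.Icc s0 r0) :
    0 ≤ wfun c s0 r0 L1 N1 K1 L2 N2 K2 f1 f2 v := by
  have hv0 := hF.hv0 hv
  have hL := hF.hLpos hv
  have hN := hF.hNpos hv
  have hK := hF.hKpos hv
  have hH := hF.hHpos
  have hvν : 0 < v ^ c.nu := Real.rpow_pos_of_pos hv0 _
  have h1 : 0 < 2 * c.a * v := by have := hF.ha; nlinarith
  have t1 : 0 < 2 * c.a * v * (N1 f1 v / L1 f1 v) := mul_pos h1 (div_pos hN hL)
  have t2 : 0 < c.D1 / Hf c s0 r0 L1 N1 K1 L2 N2 K2 f1 f2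
      * (K1 f1 v / (L1 f1 v * v ^ c.nu)) :=
    mul_pos (div_pos hF.hD1 hH) (div_pos hK (mul_pos hL hvν))
  unfold wfun
  linarith

lemma Facts.w_cont : ContinuousOn (wfun c s0 r0 L1 N1 K1 L2 N2 K2 f1 f2) (Set.Icc s0 r0) := by
  have hLne : ∀ v ∈ Set.Icc s0 r0, L1 f1 v ≠ 0 := fun v hv => ne_of_gt (hF.hLpos hv)
  have hvν : ContinuousOn (fun v : ℝ => v ^ c.nu) (Set.Icc s0 r0) :=
    continuousOn_id.rpow_const (fun x hx => Or.inl (ne_of_gt (hF.hv0 hx)))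
  unfold wfun
  apply ContinuousOn.add
  · exact ((continuous_const.mul continuous_id).continuousOn).mul (hF.hNc.div hF.hLc hLne)
  · exact continuousOn_const.mul (hF.hKc.div (hF.hLc.mul hvν)
      (fun v hv => ne_of_gt (mul_pos (hF.hLpos hv) (Real.rpow_pos_of_pos (hF.hv0 hv) _))))

lemma Facts.w_ub {v : ℝ} (hv : v ∈ Set.Icc s0 r0) :
    wfun c s0 r0 L1 N1 K1 L2 N2 K2 f1 f2 v
      ≤ (2 * c.a * c.N1M / c.L1m) * v ^ (-(2 * c.mu - 1))
        + (c.D1 * c.K1M / (Hinf c s0 r0 * c.L1m)) * v ^ (-(2 * c.mu + c.nu)) := by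
  have hv0 := hF.hv0 hv
  have hvμ : 0 < v ^ c.mu := Real.rpow_pos_of_pos hv0 _
  have hvν : 0 < v ^ c.nu := Real.rpow_pos_of_pos hv0 _
  have hvμν : 0 < v ^ (-c.mu) := Real.rpow_pos_of_pos hv0 _
  have hL := hF.hLpos hv
  have hN := hF.hNpos hv
  have hK := hF.hKpos hv
  have hH := hF.hHpos
  have hHinf := Hinf_pos hF.hs0 hF.hsr hF.hmu hF.hnu0 hF.hK1m
  have e1 : v ^ (-(2 * c.mu - 1)) = v / (v ^ c.mu * v ^ c.mu) := by
    rw [show -(2 * c.mu - 1) = 1 - (c.mu + c.mu) by ring, Real.rpow_sub hv0, Real.rpow_one,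
      Real.rpow_add hv0]
  have e2 : v ^ (-(2 * c.mu + c.nu)) = 1 / (v ^ c.mu * v ^ c.mu * v ^ c.nu) := by
    rw [show -(2 * c.mu + c.nu) = 0 - (c.mu + c.mu + c.nu) by ring, Real.rpow_sub hv0,
      Real.rpow_zero, Real.rpow_add hv0, Real.rpow_add hv0]
  have t1 : 2 * c.a * v * (N1 f1 v / L1 f1 v)
      ≤ (2 * c.a * c.N1M / c.L1m) * v ^ (-(2 * c.mu - 1)) := by
    have hdiv : N1 f1 v / L1 f1 v ≤ (c.N1M * v ^ (-c.mu)) / (c.L1m * v ^ c.mu) :=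
      div_le_div₀ (mul_nonneg hF.hN1M.le hvμν.le) ((hF.hNb v hv).2)
        (mul_pos hF.hL1m hvμ) ((hF.hLb v hv).1)
    have h2av : (0:ℝ) ≤ 2 * c.a * v := by have := hF.ha; nlinarith
    calc 2 * c.a * v * (N1 f1 v / L1 f1 v)
        ≤ 2 * c.a * v * ((c.N1M * v ^ (-c.mu)) / (c.L1m * v ^ c.mu)) :=
          mul_le_mul_of_nonneg_left hdiv h2av
      _ = (2 * c.a * c.N1M / c.L1m) * v ^ (-(2 * c.mu - 1)) := by
          rw [e1, Real.rpow_neg hv0.le]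
          have hL1m := hF.hL1m
          field_simp
  have t2 : c.D1 / Hf c s0 r0 L1 N1 K1 L2 N2 K2 f1 f2 * (K1 f1 v / (L1 f1 v * v ^ c.nu))
      ≤ (c.D1 * c.K1M / (Hinf c s0 r0 * c.L1m)) * v ^ (-(2 * c.mu + c.nu)) := by
    have hdiv : K1 f1 v / (L1 f1 v * v ^ c.nu)
        ≤ (c.K1M * v ^ (-c.mu)) / ((c.L1m * v ^ c.mu) * v ^ c.nu) :=
      div_le_div₀ (mul_nonneg hF.hK1M.le hvμν.le) ((hF.hKb v hv).2)
        (mul_pos (mul_pos hF.hL1m hvμ) hvν)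
        (mul_le_mul_of_nonneg_right (hF.hLb v hv).1 hvν.le)
    have hDH : c.D1 / Hf c s0 r0 L1 N1 K1 L2 N2 K2 f1 f2 ≤ c.D1 / Hinf c s0 r0 :=
      div_le_div₀ hF.hD1.le le_rfl hHinf hF.hHge
    calc c.D1 / Hf c s0 r0 L1 N1 K1 L2 N2 K2 f1 f2 * (K1 f1 v / (L1 f1 v * v ^ c.nu))
        ≤ (c.D1 / Hinf c s0 r0) * ((c.K1M * v ^ (-c.mu)) / ((c.L1m * v ^ c.mu) * v ^ c.nu)) :=
          mul_le_mul hDH hdiv (le_of_lt (div_pos hK (mul_pos hL hvν)))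
            (div_nonneg hF.hD1.le hHinf.le)
      _ = (c.D1 * c.K1M / (Hinf c s0 r0 * c.L1m)) * v ^ (-(2 * c.mu + c.nu)) := by
          rw [e2, Real.rpow_neg hv0.le]
          have hL1m := hF.hL1m
          field_simp
          all_goals first | tauto | ring
          all_goals first | tauto | ring
  unfold wfun
  linarith

lemma Facts.Iw_nonneg {η : ℝ} (hη : η ∈ Set.Icc s0 r0) :
    0 ≤ ∫ v in s0..η, wfun c s0 r0 L1 N1 K1 L2 N2 K2 f1 f2 v :=
  intervalIntegral.integral_nonneg hη.1
    (fun v hv => hF.w_nonneg ⟨hv.1, le_trans hv.2 hη.2⟩)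

lemma Facts.Iw_le {η : ℝ} (hη : η ∈ Set.Icc s0 r0) :
    (∫ v in s0..η, wfun c s0 r0 L1 N1 K1 L2 N2 K2 f1 f2 v) ≤ Xexp c s0 r0 := by
  have hsub : Set.Icc s0 η ⊆ Set.Icc s0 r0 := Set.Icc_subset_Icc le_rfl hη.2
  have hHinf := Hinf_pos hF.hs0 hF.hsr hF.hmu hF.hnu0 hF.hK1m
  set A1 := 2 * c.a * c.N1M / c.L1m with hA1
  set A2 := c.D1 * c.K1M / (Hinf c s0 r0 * c.L1m) with hA2
  have hA1n : 0 ≤ A1 := by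
    have := hF.ha; have := hF.hN1M; have := hF.hL1m; positivity
  have hA2n : 0 ≤ A2 := by
    have := hF.hD1; have := hF.hK1M; have := hF.hL1m; positivity
  have hmu := hF.hmu
  have hnu0 := hF.hnu0
  have hp1 : (1:ℝ) < 2 * c.mu - 1 := by linarith
  have hp2 : (1:ℝ) < 2 * c.mu + c.nu := by linarith
  have h1 : (∫ v in s0..η, wfun c s0 r0 L1 N1 K1 L2 N2 K2 f1 f2 v)
      ≤ ∫ v in s0..η, (A1 * v ^ (-(2 * c.mu - 1)) + A2 * v ^ (-(2 * c.mu + c.nu))) := by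
    apply intervalIntegral.integral_mono_on hη.1 (II_of_contOn hη hF.w_cont)
      ((intble_rpow hF.hs0 hη.1 A1).add (intble_rpow hF.hs0 hη.1 A2))
    exact fun v hv => hF.w_ub (hsub hv)
  have h2 : (∫ v in s0..η, (A1 * v ^ (-(2 * c.mu - 1)) + A2 * v ^ (-(2 * c.mu + c.nu))))
      = (∫ v in s0..η, A1 * v ^ (-(2 * c.mu - 1)))
        + ∫ v in s0..η, A2 * v ^ (-(2 * c.mu + c.nu)) :=
    intervalIntegral.integral_add (intble_rpow hF.hs0 hη.1 A1) (intble_rpow hF.hs0 hη.1 A2)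
  have h3 : (∫ v in s0..η, A1 * v ^ (-(2 * c.mu - 1)))
      ≤ A1 / ((2 * c.mu - 1 - 1) * s0 ^ (2 * c.mu - 1 - 1)) :=
    int_term_le hF.hs0 hη.1 hp1 hA1n
  have h4 : (∫ v in s0..η, A2 * v ^ (-(2 * c.mu + c.nu)))
      ≤ A2 / ((2 * c.mu + c.nu - 1) * s0 ^ (2 * c.mu + c.nu - 1)) :=
    int_term_le hF.hs0 hη.1 hp2 hA2n
  have hs2 : (0:ℝ) < s0 ^ (2 * c.mu - 2) := Real.rpow_pos_of_pos hF.hs0 _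
  have hs3 : (0:ℝ) < s0 ^ (2 * c.mu + c.nu - 1) := Real.rpow_pos_of_pos hF.hs0 _
  have e3 : A1 / ((2 * c.mu - 1 - 1) * s0 ^ (2 * c.mu - 1 - 1))
      = c.a * c.N1M / (c.L1m * (c.mu - 1) * s0 ^ (2 * c.mu - 2)) := by
    rw [hA1, show 2 * c.mu - 1 - 1 = 2 * c.mu - 2 by ring]
    have hL1m := hF.hL1m
    rw [div_div]
    rw [div_eq_div_iff (ne_of_gt (mul_pos hL1m (mul_pos (by linarith : (0:ℝ) < 2*c.mu-2) hs2)))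
      (ne_of_gt (mul_pos (mul_pos hL1m (by linarith : (0:ℝ) < c.mu-1)) hs2))]
    ring
  have e4 : A2 / ((2 * c.mu + c.nu - 1) * s0 ^ (2 * c.mu + c.nu - 1))
      = c.D1 * c.K1M / (Hinf c s0 r0 * c.L1m * (2 * c.mu + c.nu - 1)
          * s0 ^ (2 * c.mu + c.nu - 1)) := by
    rw [hA2, div_div]
    ring
  unfold Xexp
  rw [← e3, ← e4]
  linarith

lemma Facts.E1_pos (η : ℝ) : 0 < E1f c s0 r0 L1 N1 K1 L2 N2 K2 f1 f2 η := by
  rw [E1f_eq]; exact Real.exp_pos _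

lemma Facts.E1_le_one {η : ℝ} (hη : η ∈ Set.Icc s0 r0) :
    E1f c s0 r0 L1 N1 K1 L2 N2 K2 f1 f2 η ≤ 1 := by
  rw [E1f_eq]
  exact Real.exp_le_one_iff.2 (neg_nonpos.2 (hF.Iw_nonneg hη))

lemma Facts.E1_ge {η : ℝ} (hη : η ∈ Set.Icc s0 r0) :
    E1inf c s0 r0 ≤ E1f c s0 r0 L1 N1 K1 L2 N2 K2 f1 f2 η := by
  rw [E1f_eq, E1inf_eq]
  exact Real.exp_le_exp.2 (neg_le_neg (hF.Iw_le hη))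

lemma Facts.E1_cont : ContinuousOn (E1f c s0 r0 L1 N1 K1 L2 N2 K2 f1 f2) (Set.Icc s0 r0) := by
  have hint : IntegrableOn (wfun c s0 r0 L1 N1 K1 L2 N2 K2 f1 f2) (Set.uIcc s0 r0) volume := by
    rw [Set.uIcc_of_le hF.hsr.le]
    exact hF.w_cont.integrableOn_compact isCompact_Icc
  have hprim := intervalIntegral.continuousOn_primitive_interval hint
  rw [Set.uIcc_of_le hF.hsr.le] at hprim
  exact Real.continuous_exp.comp_continuousOn hprim.neg

end E1Bounds

lemma E1inf_pos (c : Cst) (s0 r0 : ℝ) : 0 < E1inf c s0 r0 := by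
  rw [E1inf_eq]; exact Real.exp_pos _

section E1Lip

def B1c (c : Cst) : ℝ := 2 * c.a * c.Nt1 / c.L1m
def B2c (c : Cst) : ℝ := 2 * c.a * c.N1M * c.Lt1 / c.L1m ^ 2
def B34c (c : Cst) (s0 r0 : ℝ) : ℝ :=
  c.D1 * c.Kt1 / (Hinf c s0 r0 * c.L1m) + c.D1 * c.K1M * Htil c s0 r0 / (Hinf c s0 r0 ^ 2 * c.L1m)
def B5c (c : Cst) (s0 r0 : ℝ) : ℝ := c.D1 * c.K1M * c.Lt1 / (Hinf c s0 r0 * c.L1m ^ 2)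

variable {c : Cst} {s0 r0 : ℝ} {L1 N1 K1 L2 N2 K2 : (ℝ → ℝ) → ℝ → ℝ} {f1 f2 g1 g2 : ℝ → ℝ}

lemma Htil_pos (hs0 : 0 < s0) (hr0 : 0 < r0) (hmu : 2 < c.mu) (hnu0 : 0 < c.nu)
    (hKt1 : 0 < c.Kt1) (hKt2 : 0 < c.Kt2) : 0 < Htil c s0 r0 := by
  unfold Htil
  have h1 : (0:ℝ) < s0 ^ (-(c.mu + c.nu - 1)) := Real.rpow_pos_of_pos hs0 _
  have h2 : (0:ℝ) < r0 ^ (-(c.mu + c.nu - 1)) := Real.rpow_pos_of_pos hr0 _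
  have h3 : (0:ℝ) < c.mu + c.nu - 1 := by linarith
  positivity

set_option maxHeartbeats 2000000 in
lemma w_lip (hF : Facts c s0 r0 L1 N1 K1 L2 N2 K2 f1 f2)
    (hG : Facts c s0 r0 L1 N1 K1 L2 N2 K2 g1 g2)
    (hLt1 : 0 < c.Lt1) (hNt1 : 0 < c.Nt1) (hKt1 : 0 < c.Kt1) (hKt2 : 0 < c.Kt2)
    (hLipL : ∀ v ∈ Set.Icc s0 r0,
      |L1 f1 v - L1 g1 v| ≤ c.Lt1 * supOn (Set.Icc s0 r0) (f1 - g1))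
    (hLipN : ∀ v ∈ Set.Icc s0 r0,
      |N1 f1 v - N1 g1 v| ≤ c.Nt1 * supOn (Set.Icc s0 r0) (f1 - g1))
    (hLipK : ∀ v ∈ Set.Icc s0 r0,
      |K1 f1 v - K1 g1 v| ≤ c.Kt1 * v ^ (-c.mu) * supOn (Set.Icc s0 r0) (f1 - g1))
    (hHlip : |Hf c s0 r0 L1 N1 K1 L2 N2 K2 f1 f2 - Hf c s0 r0 L1 N1 K1 L2 N2 K2 g1 g2|
      ≤ Htil c s0 r0 * pairNorm s0 r0 f1 f2 g1 g2) :
    ∀ v ∈ Set.Icc s0 r0,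
      |wfun c s0 r0 L1 N1 K1 L2 N2 K2 f1 f2 v - wfun c s0 r0 L1 N1 K1 L2 N2 K2 g1 g2 v|
        ≤ (pairNorm s0 r0 f1 f2 g1 g2 * B1c c) * v ^ (-(c.mu - 1))
          + (pairNorm s0 r0 f1 f2 g1 g2 * B2c c) * v ^ (-(3 * c.mu - 1))
          + (pairNorm s0 r0 f1 f2 g1 g2 * B34c c s0 r0) * v ^ (-(2 * c.mu + c.nu))
          + (pairNorm s0 r0 f1 f2 g1 g2 * B5c c s0 r0) * v ^ (-(3 * c.mu + c.nu)) := by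
  intro v hv
  have hv0 := hF.hv0 hv
  have hLf := hF.hLpos hv; have hLg := hG.hLpos hv
  have hNf := hF.hNpos hv; have hNg := hG.hNpos hv
  have hKf := hF.hKpos hv; have hKg := hG.hKpos hv
  have hhf := hF.hHpos; have hhg := hG.hHpos
  have hHinf := Hinf_pos hF.hs0 hF.hsr hF.hmu hF.hnu0 hF.hK1m
  have hHgef := hF.hHge; have hHgeg := hG.hHge
  have hL1m := hF.hL1m; have hN1M := hF.hN1M; have hK1M := hF.hK1M
  have hD1 := hF.hD1; have ha := hF.ha
  have hLbf := hF.hLb v hv; have hLbg := hG.hLb v hv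
  have hNbg := hG.hNb v hv; have hKbg := hG.hKb v hv
  have hHtil : (0:ℝ) < Htil c s0 r0 :=
    Htil_pos hF.hs0 hF.hr0 hF.hmu hF.hnu0 hKt1 hKt2
  unfold wfun
  set HFf := Hf c s0 r0 L1 N1 K1 L2 N2 K2 f1 f2 with hHFf
  set HFg := Hf c s0 r0 L1 N1 K1 L2 N2 K2 g1 g2 with hHFg
  set HI := Hinf c s0 r0 with hHI
  set HT := Htil c s0 r0 with hHT
  set P := pairNorm s0 r0 f1 f2 g1 g2 with hPdef
  set S1 := supOn (Set.Icc s0 r0) (f1 - g1) with hS1def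
  clear_value HFf HFg HI HT P S1
  have hS1P : S1 ≤ P := by rw [hPdef, hS1def]; exact le_max_left _ _
  have hS1n : 0 ≤ S1 := by rw [hS1def]; exact supOn_nonneg _ _
  have hPn : 0 ≤ P := le_trans hS1n hS1P
  set Lfv := L1 f1 v; set Lgv := L1 g1 v
  set Nfv := N1 f1 v; set Ngv := N1 g1 v
  set Kfv := K1 f1 v; set Kgv := K1 g1 v
  have hX1 : (0:ℝ) < v ^ c.mu := Real.rpow_pos_of_pos hv0 _
  have hX2 : (0:ℝ) < v ^ c.nu := Real.rpow_pos_of_pos hv0 _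
  have hXm : v ^ (-c.mu) = (v ^ c.mu)⁻¹ := Real.rpow_neg hv0.le _
  have hXmp : (0:ℝ) < v ^ (-c.mu) := Real.rpow_pos_of_pos hv0 _
  have hLmX : (0:ℝ) < c.L1m * v ^ c.mu := mul_pos hL1m hX1
  have h2av : (0:ℝ) ≤ 2 * c.a * v := by nlinarith
  -- exponent decompositions
  have hE1 : v ^ (-(c.mu - 1)) = v * (v ^ c.mu)⁻¹ := by
    rw [show -(c.mu - 1) = 1 + -c.mu by ring, Real.rpow_add hv0, Real.rpow_one, hXm]
  have hE2 : v ^ (-(3 * c.mu - 1)) = v * ((v ^ c.mu)⁻¹ * ((v ^ c.mu)⁻¹ * (v ^ c.mu)⁻¹)) := by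
    rw [show -(3 * c.mu - 1) = 1 + (-c.mu + (-c.mu + -c.mu)) by ring, Real.rpow_add hv0,
      Real.rpow_one, Real.rpow_add hv0, Real.rpow_add hv0, hXm]
  have hE3 : v ^ (-(2 * c.mu + c.nu)) = (v ^ c.mu)⁻¹ * ((v ^ c.mu)⁻¹ * (v ^ c.nu)⁻¹) := by
    rw [show -(2 * c.mu + c.nu) = -c.mu + (-c.mu + -c.nu) by ring, Real.rpow_add hv0,
      Real.rpow_add hv0, hXm, Real.rpow_neg hv0.le]
  have hE4 : v ^ (-(3 * c.mu + c.nu))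
      = (v ^ c.mu)⁻¹ * ((v ^ c.mu)⁻¹ * ((v ^ c.mu)⁻¹ * (v ^ c.nu)⁻¹)) := by
    rw [show -(3 * c.mu + c.nu) = -c.mu + (-c.mu + (-c.mu + -c.nu)) by ring, Real.rpow_add hv0,
      Real.rpow_add hv0, Real.rpow_add hv0, hXm, Real.rpow_neg hv0.le]
  -- term 1
  have d1 : |Nfv / Lfv - Ngv / Lgv|
      ≤ (c.Nt1 * P) / (c.L1m * v ^ c.mu)
        + (c.N1M * v ^ (-c.mu)) * (c.Lt1 * P) / ((c.L1m * v ^ c.mu) * (c.L1m * v ^ c.mu)) := by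
    refine (div_diff_bound hLf hLg hNg.le).trans (add_le_add ?_ ?_)
    · exact div_le_div₀ (mul_nonneg hNt1.le hPn)
        ((hLipN v hv).trans (mul_le_mul_of_nonneg_left hS1P hNt1.le)) hLmX hLbf.1
    · exact div_le_div₀ (mul_nonneg (mul_nonneg hN1M.le hXmp.le) (mul_nonneg hLt1.le hPn))
        (mul_le_mul hNbg.2 ((hLipL v hv).trans (mul_le_mul_of_nonneg_left hS1P hLt1.le))
          (abs_nonneg _) (mul_nonneg hN1M.le hXmp.le))
        (mul_pos hLmX hLmX)
        (mul_le_mul hLbf.1 hLbg.1 hLmX.le hLf.le)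
  have ht1 : |2 * c.a * v * (Nfv / Lfv) - 2 * c.a * v * (Ngv / Lgv)|
      ≤ (P * B1c c) * v ^ (-(c.mu - 1)) + (P * B2c c) * v ^ (-(3 * c.mu - 1)) := by
    rw [← mul_sub, abs_mul, abs_of_nonneg h2av]
    calc (2 * c.a * v) * |Nfv / Lfv - Ngv / Lgv|
        ≤ (2 * c.a * v) * ((c.Nt1 * P) / (c.L1m * v ^ c.mu)
            + (c.N1M * v ^ (-c.mu)) * (c.Lt1 * P) / ((c.L1m * v ^ c.mu) * (c.L1m * v ^ c.mu))) :=
          mul_le_mul_of_nonneg_left d1 h2av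
      _ = (P * B1c c) * v ^ (-(c.mu - 1)) + (P * B2c c) * v ^ (-(3 * c.mu - 1)) := by
          rw [hE1, hE2, hXm]
          unfold B1c B2c
          field_simp [hL1m.ne', hX1.ne']
  -- term 2
  have hsplit : c.D1 / HFf * (Kfv / (Lfv * v ^ c.nu)) - c.D1 / HFg * (Kgv / (Lgv * v ^ c.nu))
      = (c.D1 / v ^ c.nu) * ((Kfv - Kgv) / (HFf * Lfv)
          + Kgv * ((1 / Lfv) * (1 / HFf - 1 / HFg) + (1 / HFg) * (1 / Lfv - 1 / Lgv))) := by
    field_simp [hhf.ne', hhg.ne', hLf.ne', hLg.ne', hX2.ne']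
    ring
  have p1 : |(Kfv - Kgv) / (HFf * Lfv)|
      ≤ (c.Kt1 * v ^ (-c.mu) * P) / (HI * (c.L1m * v ^ c.mu)) := by
    rw [abs_div, abs_of_pos (mul_pos hhf hLf)]
    exact div_le_div₀ (mul_nonneg (mul_nonneg hKt1.le hXmp.le) hPn)
      ((hLipK v hv).trans (mul_le_mul_of_nonneg_left hS1P (mul_nonneg hKt1.le hXmp.le)))
      (mul_pos hHinf hLmX) (mul_le_mul hHgef hLbf.1 hLmX.le hhf.le)
  have p2 : |1 / HFf - 1 / HFg| ≤ (HT * P) / (HI * HI) := by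
    have he : 1 / HFf - 1 / HFg = (HFg - HFf) / (HFf * HFg) := by
      field_simp [hhf.ne', hhg.ne']
    rw [he, abs_div, abs_of_pos (mul_pos hhf hhg), abs_sub_comm]
    exact div_le_div₀ (mul_nonneg hHtil.le hPn) hHlip (mul_pos hHinf hHinf)
      (mul_le_mul hHgef hHgeg hHinf.le hhf.le)
  have p3 : |1 / Lfv - 1 / Lgv|
      ≤ (c.Lt1 * P) / ((c.L1m * v ^ c.mu) * (c.L1m * v ^ c.mu)) := by
    have he : 1 / Lfv - 1 / Lgv = (Lgv - Lfv) / (Lfv * Lgv) := by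
      field_simp [hLf.ne', hLg.ne']
    rw [he, abs_div, abs_of_pos (mul_pos hLf hLg), abs_sub_comm]
    exact div_le_div₀ (mul_nonneg hLt1.le hPn)
      ((hLipL v hv).trans (mul_le_mul_of_nonneg_left hS1P hLt1.le)) (mul_pos hLmX hLmX)
      (mul_le_mul hLbf.1 hLbg.1 hLmX.le hLf.le)
  have ht2 : |c.D1 / HFf * (Kfv / (Lfv * v ^ c.nu)) - c.D1 / HFg * (Kgv / (Lgv * v ^ c.nu))|
      ≤ (P * B34c c s0 r0) * v ^ (-(2 * c.mu + c.nu))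
        + (P * B5c c s0 r0) * v ^ (-(3 * c.mu + c.nu)) := by
    rw [hsplit, abs_mul, abs_of_pos (div_pos hD1 hX2)]
    have inner : |(Kfv - Kgv) / (HFf * Lfv)
        + Kgv * ((1 / Lfv) * (1 / HFf - 1 / HFg) + (1 / HFg) * (1 / Lfv - 1 / Lgv))|
        ≤ (c.Kt1 * v ^ (-c.mu) * P) / (HI * (c.L1m * v ^ c.mu))
          + (c.K1M * v ^ (-c.mu)) * ((1 / (c.L1m * v ^ c.mu)) * ((HT * P) / (HI * HI))
            + (1 / HI) * ((c.Lt1 * P) / ((c.L1m * v ^ c.mu) * (c.L1m * v ^ c.mu)))) := by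
      refine (abs_add_le _ _).trans (add_le_add p1 ?_)
      rw [abs_mul, abs_of_pos hKg]
      refine mul_le_mul hKbg.2 ?_ (abs_nonneg _) (mul_nonneg hK1M.le hXmp.le)
      refine (abs_add_le _ _).trans (add_le_add ?_ ?_)
      · rw [abs_mul, abs_of_pos (one_div_pos.2 hLf)]
        exact mul_le_mul (one_div_le_one_div_of_le hLmX hLbf.1) p2 (abs_nonneg _)
          (le_of_lt (one_div_pos.2 hLmX))
      · rw [abs_mul, abs_of_pos (one_div_pos.2 hhg)]
        exact mul_le_mul (one_div_le_one_div_of_le hHinf hHgeg) p3 (abs_nonneg _)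
          (le_of_lt (one_div_pos.2 hHinf))
    refine le_trans (mul_le_mul_of_nonneg_left inner (le_of_lt (div_pos hD1 hX2)))
      (le_of_eq ?_)
    rw [hE3, hE4, hXm]
    unfold B34c B5c
    rw [← hHI, ← hHT]
    field_simp [hHinf.ne', hL1m.ne', hX1.ne', hX2.ne']
    ring
  -- combine
  refine le_trans (le_of_eq (congrArg abs (by ring :
      2 * c.a * v * (Nfv / Lfv) + c.D1 / HFf * (Kfv / (Lfv * v ^ c.nu))
        - (2 * c.a * v * (Ngv / Lgv) + c.D1 / HFg * (Kgv / (Lgv * v ^ c.nu)))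
      = (2 * c.a * v * (Nfv / Lfv) - 2 * c.a * v * (Ngv / Lgv))
        + (c.D1 / HFf * (Kfv / (Lfv * v ^ c.nu)) - c.D1 / HFg * (Kgv / (Lgv * v ^ c.nu))))))
    ((abs_add_le _ _).trans ?_)
  linarith [ht1, ht2]

end E1Lip

section E1LipInt

variable {c : Cst} {s0 r0 : ℝ} {L1 N1 K1 L2 N2 K2 : (ℝ → ℝ) → ℝ → ℝ} {f1 f2 g1 g2 : ℝ → ℝ}

lemma E1til_eq (c : Cst) (s0 r0 : ℝ) :
    E1til c s0 r0 = E1tilG c s0 (Hinf c s0 r0) (Htil c s0 r0) := rfl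

lemma E1til_pos (hs0 : 0 < s0) (hr0 : 0 < r0) (hmu : 2 < c.mu) (hnu0 : 0 < c.nu)
    (ha : 0 < c.a) (hD1 : 0 < c.D1) (hL1m : 0 < c.L1m) (hN1M : 0 < c.N1M) (hK1M : 0 < c.K1M)
    (hK1m : 0 < c.K1m) (hLt1 : 0 < c.Lt1) (hNt1 : 0 < c.Nt1) (hKt1 : 0 < c.Kt1)
    (hKt2 : 0 < c.Kt2) (hsr : s0 < r0) : 0 < E1til c s0 r0 := by
  have hHinf := Hinf_pos hs0 hsr hmu hnu0 hK1m
  have hHtil := Htil_pos hs0 hr0 hmu hnu0 hKt1 hKt2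
  rw [E1til_eq]
  unfold E1tilG
  have p1 : (0:ℝ) < s0 ^ (c.mu - 2) := Real.rpow_pos_of_pos hs0 _
  have p2 : (0:ℝ) < s0 ^ (3 * c.mu - 2) := Real.rpow_pos_of_pos hs0 _
  have p3 : (0:ℝ) < s0 ^ (2 * c.mu + c.nu - 1) := Real.rpow_pos_of_pos hs0 _
  have p4 : (0:ℝ) < s0 ^ (3 * c.mu + c.nu - 1) := Real.rpow_pos_of_pos hs0 _
  have q1 : (0:ℝ) < c.mu - 2 := by linarith
  have q2 : (0:ℝ) < 3 * c.mu - 2 := by linarith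
  have q3 : (0:ℝ) < 2 * c.mu + c.nu - 1 := by linarith
  have q4 : (0:ℝ) < 3 * c.mu + c.nu - 1 := by linarith
  have HI := hHinf; have HT := hHtil
  apply add_pos
  · apply mul_pos (by linarith)
    apply add_pos
    · exact div_pos hNt1 (mul_pos (mul_pos hL1m q1) p1)
    · exact div_pos (mul_pos hN1M hLt1) (mul_pos (mul_pos (pow_pos hL1m 2) q2) p2)
  · apply mul_pos hD1
    apply add_pos
    · exact div_pos hKt1 (mul_pos (mul_pos (mul_pos hHinf hL1m) q3) p3)
    · apply mul_pos (div_pos hK1M (mul_pos hHinf hL1m))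
      apply add_pos
      · exact div_pos hHtil (mul_pos (mul_pos hHinf q3) p3)
      · exact div_pos hLt1 (mul_pos (mul_pos hL1m q4) p4)

set_option maxHeartbeats 2000000 in
lemma E1_lip (hF : Facts c s0 r0 L1 N1 K1 L2 N2 K2 f1 f2)
    (hG : Facts c s0 r0 L1 N1 K1 L2 N2 K2 g1 g2)
    (hLt1 : 0 < c.Lt1) (hNt1 : 0 < c.Nt1) (hKt1 : 0 < c.Kt1) (hKt2 : 0 < c.Kt2)
    (hLipL : ∀ v ∈ Set.Icc s0 r0,
      |L1 f1 v - L1 g1 v| ≤ c.Lt1 * supOn (Set.Icc s0 r0) (f1 - g1))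
    (hLipN : ∀ v ∈ Set.Icc s0 r0,
      |N1 f1 v - N1 g1 v| ≤ c.Nt1 * supOn (Set.Icc s0 r0) (f1 - g1))
    (hLipK : ∀ v ∈ Set.Icc s0 r0,
      |K1 f1 v - K1 g1 v| ≤ c.Kt1 * v ^ (-c.mu) * supOn (Set.Icc s0 r0) (f1 - g1))
    (hHlip : |Hf c s0 r0 L1 N1 K1 L2 N2 K2 f1 f2 - Hf c s0 r0 L1 N1 K1 L2 N2 K2 g1 g2|
      ≤ Htil c s0 r0 * pairNorm s0 r0 f1 f2 g1 g2) :
    ∀ η ∈ Set.Icc s0 r0,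
      |E1f c s0 r0 L1 N1 K1 L2 N2 K2 f1 f2 η - E1f c s0 r0 L1 N1 K1 L2 N2 K2 g1 g2 η|
        ≤ E1til c s0 r0 * pairNorm s0 r0 f1 f2 g1 g2 := by
  intro η hη
  have hPn : 0 ≤ pairNorm s0 r0 f1 f2 g1 g2 := pairNorm_nonneg _ _ _ _ _ _
  have hHinf := Hinf_pos hF.hs0 hF.hsr hF.hmu hF.hnu0 hF.hK1m
  have hHtil := Htil_pos hF.hs0 hF.hr0 hF.hmu hF.hnu0 hKt1 hKt2
  have hL1m := hF.hL1m; have hN1M := hF.hN1M; have hK1M := hF.hK1M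
  have hD1 := hF.hD1; have ha := hF.ha
  have hmu := hF.hmu; have hnu0 := hF.hnu0
  rw [E1f_eq, E1f_eq]
  refine (exp_neg_lip (hF.Iw_nonneg hη) (hG.Iw_nonneg hη)).trans ?_
  rw [← intervalIntegral.integral_sub (II_of_contOn hη hF.w_cont) (II_of_contOn hη hG.w_cont)]
  set P := pairNorm s0 r0 f1 f2 g1 g2 with hP
  have hB1n : 0 ≤ P * B1c c := by
    apply mul_nonneg hPn
    unfold B1c; positivity
  have hB2n : 0 ≤ P * B2c c := by
    apply mul_nonneg hPn
    unfold B2c; positivity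
  have hB34n : 0 ≤ P * B34c c s0 r0 := by
    apply mul_nonneg hPn
    unfold B34c
    have h1 : (0:ℝ) ≤ c.D1 * c.Kt1 / (Hinf c s0 r0 * c.L1m) :=
      div_nonneg (by positivity) (mul_pos hHinf hL1m).le
    have h2 : (0:ℝ) ≤ c.D1 * c.K1M * Htil c s0 r0 / (Hinf c s0 r0 ^ 2 * c.L1m) :=
      div_nonneg (by positivity) (mul_pos (pow_pos hHinf 2) hL1m).le
    linarith
  have hB5n : 0 ≤ P * B5c c s0 r0 := by
    apply mul_nonneg hPn
    unfold B5c
    exact div_nonneg (by positivity) (mul_pos hHinf (pow_pos hL1m 2)).le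
  have hp1 : (1:ℝ) < c.mu - 1 := by linarith
  have hp2 : (1:ℝ) < 3 * c.mu - 1 := by linarith
  have hp3 : (1:ℝ) < 2 * c.mu + c.nu := by linarith
  have hp4 : (1:ℝ) < 3 * c.mu + c.nu := by linarith
  have i1 := intble_rpow (p := c.mu - 1) hF.hs0 hη.1 (P * B1c c)
  have i2 := intble_rpow (p := 3 * c.mu - 1) hF.hs0 hη.1 (P * B2c c)
  have i3 := intble_rpow (p := 2 * c.mu + c.nu) hF.hs0 hη.1 (P * B34c c s0 r0)
  have i4 := intble_rpow (p := 3 * c.mu + c.nu) hF.hs0 hη.1 (P * B5c c s0 r0)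
  have key : |∫ v in s0..η, (wfun c s0 r0 L1 N1 K1 L2 N2 K2 f1 f2 v
      - wfun c s0 r0 L1 N1 K1 L2 N2 K2 g1 g2 v)|
      ≤ ∫ v in s0..η, ((P * B1c c) * v ^ (-(c.mu - 1))
        + (P * B2c c) * v ^ (-(3 * c.mu - 1))
        + (P * B34c c s0 r0) * v ^ (-(2 * c.mu + c.nu))
        + (P * B5c c s0 r0) * v ^ (-(3 * c.mu + c.nu))) := by
    apply abs_int_le hη.1
      ((II_of_contOn hη hF.w_cont).sub (II_of_contOn hη hG.w_cont))
      (((i1.add i2).add i3).add i4)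
    intro v hv
    exact w_lip hF hG hLt1 hNt1 hKt1 hKt2 hLipL hLipN hLipK hHlip v
      ⟨hv.1, le_trans hv.2 hη.2⟩
  refine key.trans ?_
  have hsplit : (∫ v in s0..η, ((P * B1c c) * v ^ (-(c.mu - 1))
        + (P * B2c c) * v ^ (-(3 * c.mu - 1))
        + (P * B34c c s0 r0) * v ^ (-(2 * c.mu + c.nu))
        + (P * B5c c s0 r0) * v ^ (-(3 * c.mu + c.nu))))
      = (((∫ v in s0..η, (P * B1c c) * v ^ (-(c.mu - 1)))
        + ∫ v in s0..η, (P * B2c c) * v ^ (-(3 * c.mu - 1)))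
        + ∫ v in s0..η, (P * B34c c s0 r0) * v ^ (-(2 * c.mu + c.nu)))
        + ∫ v in s0..η, (P * B5c c s0 r0) * v ^ (-(3 * c.mu + c.nu)) := by
    rw [intervalIntegral.integral_add ((i1.add i2).add i3) i4,
      intervalIntegral.integral_add (i1.add i2) i3,
      intervalIntegral.integral_add i1 i2]
  rw [hsplit]
  have j1 := int_term_le hF.hs0 hη.1 hp1 hB1n
  have j2 := int_term_le hF.hs0 hη.1 hp2 hB2n
  have j3 := int_term_le hF.hs0 hη.1 hp3 hB34n
  have j4 := int_term_le hF.hs0 hη.1 hp4 hB5n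
  have efin : (P * B1c c) / ((c.mu - 1 - 1) * s0 ^ (c.mu - 1 - 1))
      + (P * B2c c) / ((3 * c.mu - 1 - 1) * s0 ^ (3 * c.mu - 1 - 1))
      + (P * B34c c s0 r0) / ((2 * c.mu + c.nu - 1) * s0 ^ (2 * c.mu + c.nu - 1))
      + (P * B5c c s0 r0) / ((3 * c.mu + c.nu - 1) * s0 ^ (3 * c.mu + c.nu - 1))
      = E1til c s0 r0 * P := by
    rw [show c.mu - 1 - 1 = c.mu - 2 by ring, show 3 * c.mu - 1 - 1 = 3 * c.mu - 2 by ring,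
      E1til_eq]
    unfold E1tilG B1c B2c B34c B5c
    have p1 : (0:ℝ) < s0 ^ (c.mu - 2) := Real.rpow_pos_of_pos hF.hs0 _
    have p2 : (0:ℝ) < s0 ^ (3 * c.mu - 2) := Real.rpow_pos_of_pos hF.hs0 _
    have p3 : (0:ℝ) < s0 ^ (2 * c.mu + c.nu - 1) := Real.rpow_pos_of_pos hF.hs0 _
    have p4 : (0:ℝ) < s0 ^ (3 * c.mu + c.nu - 1) := Real.rpow_pos_of_pos hF.hs0 _
    have q1 : (0:ℝ) < c.mu - 2 := by linarith
    have q2 : (0:ℝ) < 3 * c.mu - 2 := by linarith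
    have q3 : (0:ℝ) < 2 * c.mu + c.nu - 1 := by linarith
    have q4 : (0:ℝ) < 3 * c.mu + c.nu - 1 := by linarith
    field_simp [hL1m.ne', hHinf.ne', p1.ne', p2.ne', p3.ne', p4.ne', q1.ne', q2.ne', q3.ne',
      q4.ne']
    ring
  linarith [j1, j2, j3, j4]
end E1LipInt

section H1Lemmas

def qfun (c : Cst) (s0 r0 : ℝ) (L1 N1 K1 L2 N2 K2 : (ℝ → ℝ) → ℝ → ℝ) (f1 f2 : ℝ → ℝ)
    (v : ℝ) : ℝ :=
  K1 f1 v / (v ^ c.nu * E1f c s0 r0 L1 N1 K1 L2 N2 K2 f1 f2 v)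

def C1tilc (c : Cst) (s0 r0 : ℝ) : ℝ :=
  c.Kt1 / E1inf c s0 r0 + c.K1M * E1til c s0 r0 / E1inf c s0 r0 ^ 2

variable {c : Cst} {s0 r0 : ℝ} {L1 N1 K1 L2 N2 K2 : (ℝ → ℝ) → ℝ → ℝ} {f1 f2 g1 g2 : ℝ → ℝ}

lemma H1f_eq (η : ℝ) : H1f c s0 r0 L1 N1 K1 L2 N2 K2 f1 f2 η
    = ∫ v in s0..η, qfun c s0 r0 L1 N1 K1 L2 N2 K2 f1 f2 v := rfl

variable (hF : Facts c s0 r0 L1 N1 K1 L2 N2 K2 f1 f2)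

include hF

lemma Facts.q_cont : ContinuousOn (qfun c s0 r0 L1 N1 K1 L2 N2 K2 f1 f2) (Set.Icc s0 r0) := by
  unfold qfun
  apply hF.hKc.div
  · exact (continuousOn_id.rpow_const (fun x hx => Or.inl (ne_of_gt (hF.hv0 hx)))).mul hF.E1_cont
  · exact fun v hv => ne_of_gt (mul_pos (Real.rpow_pos_of_pos (hF.hv0 hv) _) (hF.E1_pos v))

lemma Facts.q_nonneg {v : ℝ} (hv : v ∈ Set.Icc s0 r0) :
    0 ≤ qfun c s0 r0 L1 N1 K1 L2 N2 K2 f1 f2 v :=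
  div_nonneg (hF.hKpos hv).le
    (mul_pos (Real.rpow_pos_of_pos (hF.hv0 hv) _) (hF.E1_pos v)).le

lemma Facts.q_ub {v : ℝ} (hv : v ∈ Set.Icc s0 r0) :
    qfun c s0 r0 L1 N1 K1 L2 N2 K2 f1 f2 v
      ≤ (c.K1M / E1inf c s0 r0) * v ^ (-(c.mu + c.nu)) := by
  have hv0 := hF.hv0 hv
  have hX1 : (0:ℝ) < v ^ c.mu := Real.rpow_pos_of_pos hv0 _
  have hX2 : (0:ℝ) < v ^ c.nu := Real.rpow_pos_of_pos hv0 _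
  have hXmp : (0:ℝ) < v ^ (-c.mu) := Real.rpow_pos_of_pos hv0 _
  have hEinf := E1inf_pos c s0 r0
  have he : v ^ (-(c.mu + c.nu)) = (v ^ c.mu)⁻¹ * (v ^ c.nu)⁻¹ := by
    rw [show -(c.mu + c.nu) = -c.mu + -c.nu by ring, Real.rpow_add hv0, Real.rpow_neg hv0.le,
      Real.rpow_neg hv0.le]
  have h1 : qfun c s0 r0 L1 N1 K1 L2 N2 K2 f1 f2 v
      ≤ (c.K1M * v ^ (-c.mu)) / (v ^ c.nu * E1inf c s0 r0) := by
    unfold qfun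
    exact div_le_div₀ (mul_nonneg hF.hK1M.le hXmp.le) (hF.hKb v hv).2
      (mul_pos hX2 hEinf) (mul_le_mul_of_nonneg_left (hF.E1_ge hv) hX2.le)
  refine h1.trans (le_of_eq ?_)
  rw [he, Real.rpow_neg hv0.le]
  field_simp

lemma Facts.H1_nonneg {η : ℝ} (hη : η ∈ Set.Icc s0 r0) :
    0 ≤ H1f c s0 r0 L1 N1 K1 L2 N2 K2 f1 f2 η := by
  rw [H1f_eq]
  exact intervalIntegral.integral_nonneg hη.1
    (fun v hv => hF.q_nonneg ⟨hv.1, le_trans hv.2 hη.2⟩)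

lemma Facts.H1_ub {η : ℝ} (hη : η ∈ Set.Icc s0 r0) :
    H1f c s0 r0 L1 N1 K1 L2 N2 K2 f1 f2 η ≤ H1sup c s0 r0 := by
  have hEinf := E1inf_pos c s0 r0
  have hq : (1:ℝ) < c.mu + c.nu := by have := hF.hmu; have := hF.hnu0; linarith
  rw [H1f_eq]
  have h1 : (∫ v in s0..η, qfun c s0 r0 L1 N1 K1 L2 N2 K2 f1 f2 v)
      ≤ ∫ v in s0..η, (c.K1M / E1inf c s0 r0) * v ^ (-(c.mu + c.nu)) := by
    apply intervalIntegral.integral_mono_on hη.1 (II_of_contOn hη hF.q_cont)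
      (intble_rpow hF.hs0 hη.1 _)
    exact fun v hv => hF.q_ub ⟨hv.1, le_trans hv.2 hη.2⟩
  refine h1.trans ((int_term_le hF.hs0 hη.1 hq
    (div_nonneg hF.hK1M.le hEinf.le)).trans (le_of_eq ?_))
  show (c.K1M / E1inf c s0 r0) / ((c.mu + c.nu - 1) * s0 ^ (c.mu + c.nu - 1))
      = c.K1M / (E1inf c s0 r0 * (c.mu + c.nu - 1) * s0 ^ (c.mu + c.nu - 1))
  rw [div_div, mul_assoc]

lemma Facts.H1_cont : ContinuousOn (H1f c s0 r0 L1 N1 K1 L2 N2 K2 f1 f2) (Set.Icc s0 r0) := by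
  have hint : IntegrableOn (qfun c s0 r0 L1 N1 K1 L2 N2 K2 f1 f2) (Set.uIcc s0 r0) volume := by
    rw [Set.uIcc_of_le hF.hsr.le]
    exact hF.q_cont.integrableOn_compact isCompact_Icc
  have hprim := intervalIntegral.continuousOn_primitive_interval hint
  rwa [Set.uIcc_of_le hF.hsr.le] at hprim

omit hF

lemma H1sup_pos (c : Cst) {s0 r0 : ℝ} (hs0 : 0 < s0) (hmu : 2 < c.mu) (hnu0 : 0 < c.nu)
    (hK1M : 0 < c.K1M) : 0 < H1sup c s0 r0 := by
  have hEinf := E1inf_pos c s0 r0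
  have h1 : (0:ℝ) < s0 ^ (c.mu + c.nu - 1) := Real.rpow_pos_of_pos hs0 _
  have h2 : (0:ℝ) < c.mu + c.nu - 1 := by linarith
  exact div_pos hK1M (mul_pos (mul_pos hEinf h2) h1)

set_option maxHeartbeats 1000000 in
lemma q_lip (hF : Facts c s0 r0 L1 N1 K1 L2 N2 K2 f1 f2)
    (hG : Facts c s0 r0 L1 N1 K1 L2 N2 K2 g1 g2)
    (hLipK : ∀ v ∈ Set.Icc s0 r0,
      |K1 f1 v - K1 g1 v| ≤ c.Kt1 * v ^ (-c.mu) * supOn (Set.Icc s0 r0) (f1 - g1))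
    (hKt1 : 0 < c.Kt1) (hE1tn : 0 ≤ E1til c s0 r0)
    (hE1lip : ∀ v ∈ Set.Icc s0 r0,
      |E1f c s0 r0 L1 N1 K1 L2 N2 K2 f1 f2 v - E1f c s0 r0 L1 N1 K1 L2 N2 K2 g1 g2 v|
        ≤ E1til c s0 r0 * pairNorm s0 r0 f1 f2 g1 g2) :
    ∀ v ∈ Set.Icc s0 r0,
      |qfun c s0 r0 L1 N1 K1 L2 N2 K2 f1 f2 v - qfun c s0 r0 L1 N1 K1 L2 N2 K2 g1 g2 v|
        ≤ (pairNorm s0 r0 f1 f2 g1 g2 * C1tilc c s0 r0) * v ^ (-(c.mu + c.nu)) := by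
  intro v hv
  have hv0 := hF.hv0 hv
  have hX1 : (0:ℝ) < v ^ c.mu := Real.rpow_pos_of_pos hv0 _
  have hX2 : (0:ℝ) < v ^ c.nu := Real.rpow_pos_of_pos hv0 _
  have hXmp : (0:ℝ) < v ^ (-c.mu) := Real.rpow_pos_of_pos hv0 _
  have hXm : v ^ (-c.mu) = (v ^ c.mu)⁻¹ := Real.rpow_neg hv0.le _
  have hEinf := E1inf_pos c s0 r0
  have hEf := hF.E1_pos v; have hEg := hG.E1_pos v
  have hEfge := hF.E1_ge hv; have hEgge := hG.E1_ge hv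
  have hKg := hG.hKpos hv
  have hKbg := hG.hKb v hv
  have hK1M := hF.hK1M
  have he : v ^ (-(c.mu + c.nu)) = (v ^ c.mu)⁻¹ * (v ^ c.nu)⁻¹ := by
    rw [show -(c.mu + c.nu) = -c.mu + -c.nu by ring, Real.rpow_add hv0, hXm,
      Real.rpow_neg hv0.le]
  set P := pairNorm s0 r0 f1 f2 g1 g2 with hP
  set S1 := supOn (Set.Icc s0 r0) (f1 - g1) with hS1
  have hS1P : S1 ≤ P := le_max_left _ _
  have hS1n : 0 ≤ S1 := supOn_nonneg _ _
  have hPn : 0 ≤ P := le_trans hS1n hS1P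
  set Ef := E1f c s0 r0 L1 N1 K1 L2 N2 K2 f1 f2 v with hEfd
  set Eg := E1f c s0 r0 L1 N1 K1 L2 N2 K2 g1 g2 v with hEgd
  have hBf : (0:ℝ) < v ^ c.nu * Ef := mul_pos hX2 hEf
  have hBg : (0:ℝ) < v ^ c.nu * Eg := mul_pos hX2 hEg
  unfold qfun
  refine (div_diff_bound hBf hBg hKg.le).trans ?_
  have t1 : |K1 f1 v - K1 g1 v| / (v ^ c.nu * Ef)
      ≤ (c.Kt1 * v ^ (-c.mu) * P) / (v ^ c.nu * E1inf c s0 r0) := by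
    exact div_le_div₀ (mul_nonneg (mul_nonneg hKt1.le hXmp.le) hPn)
      ((hLipK v hv).trans (mul_le_mul_of_nonneg_left hS1P (mul_nonneg hKt1.le hXmp.le)))
      (mul_pos hX2 hEinf) (mul_le_mul_of_nonneg_left hEfge hX2.le)
  have t2 : K1 g1 v * |v ^ c.nu * Ef - v ^ c.nu * Eg| / ((v ^ c.nu * Ef) * (v ^ c.nu * Eg))
      ≤ (c.K1M * v ^ (-c.mu)) * (v ^ c.nu * (E1til c s0 r0 * P))
        / ((v ^ c.nu * E1inf c s0 r0) * (v ^ c.nu * E1inf c s0 r0)) := by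
    have habs : |v ^ c.nu * Ef - v ^ c.nu * Eg| ≤ v ^ c.nu * (E1til c s0 r0 * P) := by
      rw [← mul_sub, abs_mul, abs_of_pos hX2]
      exact mul_le_mul_of_nonneg_left (hE1lip v hv) hX2.le
    exact div_le_div₀ (mul_nonneg (mul_nonneg hK1M.le hXmp.le)
        (mul_nonneg hX2.le (mul_nonneg hE1tn hPn)))
      (mul_le_mul hKbg.2 habs (abs_nonneg _) (mul_nonneg hK1M.le hXmp.le))
      (mul_pos (mul_pos hX2 hEinf) (mul_pos hX2 hEinf))
      (mul_le_mul (mul_le_mul_of_nonneg_left hEfge hX2.le)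
        (mul_le_mul_of_nonneg_left hEgge hX2.le) (mul_pos hX2 hEinf).le hBf.le)
  refine (add_le_add t1 t2).trans (le_of_eq ?_)
  rw [he, hXm]
  unfold C1tilc
  field_simp [hEinf.ne', hX1.ne', hX2.ne']

set_option maxHeartbeats 1000000 in
lemma H1_lip (hF : Facts c s0 r0 L1 N1 K1 L2 N2 K2 f1 f2)
    (hG : Facts c s0 r0 L1 N1 K1 L2 N2 K2 g1 g2)
    (hLipK : ∀ v ∈ Set.Icc s0 r0,
      |K1 f1 v - K1 g1 v| ≤ c.Kt1 * v ^ (-c.mu) * supOn (Set.Icc s0 r0) (f1 - g1))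
    (hKt1 : 0 < c.Kt1) (hE1tn : 0 ≤ E1til c s0 r0)
    (hE1lip : ∀ v ∈ Set.Icc s0 r0,
      |E1f c s0 r0 L1 N1 K1 L2 N2 K2 f1 f2 v - E1f c s0 r0 L1 N1 K1 L2 N2 K2 g1 g2 v|
        ≤ E1til c s0 r0 * pairNorm s0 r0 f1 f2 g1 g2) :
    ∀ η ∈ Set.Icc s0 r0,
      |H1f c s0 r0 L1 N1 K1 L2 N2 K2 f1 f2 η - H1f c s0 r0 L1 N1 K1 L2 N2 K2 g1 g2 η|
        ≤ H1til c s0 r0 * pairNorm s0 r0 f1 f2 g1 g2 := by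
  intro η hη
  have hPn : 0 ≤ pairNorm s0 r0 f1 f2 g1 g2 := pairNorm_nonneg _ _ _ _ _ _
  have hEinf := E1inf_pos c s0 r0
  have hK1M := hF.hK1M
  have hq : (1:ℝ) < c.mu + c.nu := by have := hF.hmu; have := hF.hnu0; linarith
  have hCn : 0 ≤ C1tilc c s0 r0 := by
    unfold C1tilc
    have h1 : (0:ℝ) ≤ c.Kt1 / E1inf c s0 r0 := div_nonneg hKt1.le hEinf.le
    have h2 : (0:ℝ) ≤ c.K1M * E1til c s0 r0 / E1inf c s0 r0 ^ 2 :=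
      div_nonneg (mul_nonneg hK1M.le hE1tn) (pow_pos hEinf 2).le
    linarith
  rw [H1f_eq, H1f_eq,
    ← intervalIntegral.integral_sub (II_of_contOn hη hF.q_cont) (II_of_contOn hη hG.q_cont)]
  set P := pairNorm s0 r0 f1 f2 g1 g2 with hP
  have key : |∫ v in s0..η, (qfun c s0 r0 L1 N1 K1 L2 N2 K2 f1 f2 v
      - qfun c s0 r0 L1 N1 K1 L2 N2 K2 g1 g2 v)|
      ≤ ∫ v in s0..η, (P * C1tilc c s0 r0) * v ^ (-(c.mu + c.nu)) := by
    apply abs_int_le hη.1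
      ((II_of_contOn hη hF.q_cont).sub (II_of_contOn hη hG.q_cont))
      (intble_rpow hF.hs0 hη.1 _)
    intro v hv
    exact q_lip hF hG hLipK hKt1 hE1tn hE1lip v ⟨hv.1, le_trans hv.2 hη.2⟩
  refine key.trans ((int_term_le hF.hs0 hη.1 hq (mul_nonneg hPn hCn)).trans (le_of_eq ?_))
  have hsp : (0:ℝ) < s0 ^ (c.mu + c.nu - 1) := Real.rpow_pos_of_pos hF.hs0 _
  have hq1 : (0:ℝ) < c.mu + c.nu - 1 := by linarith
  show (P * C1tilc c s0 r0) / ((c.mu + c.nu - 1) * s0 ^ (c.mu + c.nu - 1))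
      = H1til c s0 r0 * P
  unfold C1tilc H1til H1tilG
  rw [show E1tilG c s0 (Hinf c s0 r0) (Htil c s0 r0) = E1til c s0 r0 from rfl,
    show E1infG c s0 (Hinf c s0 r0) = E1inf c s0 r0 from rfl]
  field_simp [hEinf.ne', hsp.ne', hq1.ne']

end H1Lemmas

section G1Final

def rfun (c : Cst) (s0 r0 : ℝ) (L1 N1 K1 L2 N2 K2 : (ℝ → ℝ) → ℝ → ℝ) (f1 f2 : ℝ → ℝ)
    (v : ℝ) : ℝ :=
  E1f c s0 r0 L1 N1 K1 L2 N2 K2 f1 f2 v * H1f c s0 r0 L1 N1 K1 L2 N2 K2 f1 f2 v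
    / (L1 f1 v * v ^ c.nu)

def Dac (c : Cst) (s0 r0 : ℝ) : ℝ :=
  H1sup c s0 r0 * E1til c s0 r0 / c.L1m + H1til c s0 r0 / c.L1m

def Dbc (c : Cst) (s0 r0 : ℝ) : ℝ := H1sup c s0 r0 * c.Lt1 / c.L1m ^ 2

variable {c : Cst} {s0 r0 : ℝ} {L1 N1 K1 L2 N2 K2 : (ℝ → ℝ) → ℝ → ℝ} {f1 f2 g1 g2 : ℝ → ℝ}

lemma G1f_eq (η : ℝ) : G1f c s0 r0 L1 N1 K1 L2 N2 K2 f1 f2 η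
    = ∫ v in s0..η, rfun c s0 r0 L1 N1 K1 L2 N2 K2 f1 f2 v := rfl

lemma r_cont (hF : Facts c s0 r0 L1 N1 K1 L2 N2 K2 f1 f2) :
    ContinuousOn (rfun c s0 r0 L1 N1 K1 L2 N2 K2 f1 f2) (Set.Icc s0 r0) := by
  unfold rfun
  apply (hF.E1_cont.mul hF.H1_cont).div
  · exact hF.hLc.mul (continuousOn_id.rpow_const (fun x hx => Or.inl (ne_of_gt (hF.hv0 hx))))
  · exact fun v hv => ne_of_gt (mul_pos (hF.hLpos hv) (Real.rpow_pos_of_pos (hF.hv0 hv) _))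

lemma H1til_nonneg (hs0 : 0 < s0) (hmu : 2 < c.mu) (hnu0 : 0 < c.nu)
    (hKt1 : 0 < c.Kt1) (hK1M : 0 < c.K1M) (hE1tn : 0 ≤ E1til c s0 r0) :
    0 ≤ H1til c s0 r0 := by
  have hEinf := E1inf_pos c s0 r0
  have hsp : (0:ℝ) < s0 ^ (c.mu + c.nu - 1) := Real.rpow_pos_of_pos hs0 _
  show (0:ℝ) ≤ (c.Kt1 + c.K1M * E1tilG c s0 (Hinf c s0 r0) (Htil c s0 r0)
      / E1infG c s0 (Hinf c s0 r0))
    / (E1infG c s0 (Hinf c s0 r0) * (c.mu + c.nu - 1) * s0 ^ (c.mu + c.nu - 1))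
  rw [show E1tilG c s0 (Hinf c s0 r0) (Htil c s0 r0) = E1til c s0 r0 from rfl,
    show E1infG c s0 (Hinf c s0 r0) = E1inf c s0 r0 from rfl]
  exact div_nonneg (add_nonneg hKt1.le (div_nonneg (mul_nonneg hK1M.le hE1tn) hEinf.le))
    (mul_nonneg (mul_nonneg hEinf.le (by linarith)) hsp.le)

set_option maxHeartbeats 1000000 in
lemma r_lip (hF : Facts c s0 r0 L1 N1 K1 L2 N2 K2 f1 f2)
    (hG : Facts c s0 r0 L1 N1 K1 L2 N2 K2 g1 g2)
    (hLt1 : 0 < c.Lt1) (hKt1 : 0 < c.Kt1) (hK1M : 0 < c.K1M)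
    (hE1tn : 0 ≤ E1til c s0 r0)
    (hE1lip : ∀ v ∈ Set.Icc s0 r0,
      |E1f c s0 r0 L1 N1 K1 L2 N2 K2 f1 f2 v - E1f c s0 r0 L1 N1 K1 L2 N2 K2 g1 g2 v|
        ≤ E1til c s0 r0 * pairNorm s0 r0 f1 f2 g1 g2)
    (hH1lip : ∀ v ∈ Set.Icc s0 r0,
      |H1f c s0 r0 L1 N1 K1 L2 N2 K2 f1 f2 v - H1f c s0 r0 L1 N1 K1 L2 N2 K2 g1 g2 v|
        ≤ H1til c s0 r0 * pairNorm s0 r0 f1 f2 g1 g2)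
    (hLipL : ∀ v ∈ Set.Icc s0 r0,
      |L1 f1 v - L1 g1 v| ≤ c.Lt1 * supOn (Set.Icc s0 r0) (f1 - g1)) :
    ∀ v ∈ Set.Icc s0 r0,
      |rfun c s0 r0 L1 N1 K1 L2 N2 K2 f1 f2 v - rfun c s0 r0 L1 N1 K1 L2 N2 K2 g1 g2 v|
        ≤ (pairNorm s0 r0 f1 f2 g1 g2 * Dac c s0 r0) * v ^ (-(c.mu + c.nu))
          + (pairNorm s0 r0 f1 f2 g1 g2 * Dbc c s0 r0) * v ^ (-(2 * c.mu + c.nu)) := by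
  intro v hv
  have hv0 := hF.hv0 hv
  have hX1 : (0:ℝ) < v ^ c.mu := Real.rpow_pos_of_pos hv0 _
  have hX2 : (0:ℝ) < v ^ c.nu := Real.rpow_pos_of_pos hv0 _
  have hL1m := hF.hL1m
  have hLf := hF.hLpos hv; have hLg := hG.hLpos hv
  have hLbf := hF.hLb v hv; have hLbg := hG.hLb v hv
  have hLmX : (0:ℝ) < c.L1m * v ^ c.mu := mul_pos hL1m hX1
  have hEf := hF.E1_pos v; have hEg := hG.E1_pos v
  have hEg1 := hG.E1_le_one hv
  have hH1f0 := hF.H1_nonneg hv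
  have hH1fs := hF.H1_ub hv
  have hH1s := H1sup_pos c (r0 := r0) hF.hs0 hF.hmu hF.hnu0 hF.hK1M
  have hH1tn := H1til_nonneg hF.hs0 hF.hmu hF.hnu0 hKt1 hK1M hE1tn
  have he1 : v ^ (-(c.mu + c.nu)) = (v ^ c.mu)⁻¹ * (v ^ c.nu)⁻¹ := by
    rw [show -(c.mu + c.nu) = -c.mu + -c.nu by ring, Real.rpow_add hv0,
      Real.rpow_neg hv0.le, Real.rpow_neg hv0.le]
  have he2 : v ^ (-(2 * c.mu + c.nu)) = (v ^ c.mu)⁻¹ * ((v ^ c.mu)⁻¹ * (v ^ c.nu)⁻¹) := by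
    rw [show -(2 * c.mu + c.nu) = -c.mu + (-c.mu + -c.nu) by ring, Real.rpow_add hv0,
      Real.rpow_add hv0, Real.rpow_neg hv0.le, Real.rpow_neg hv0.le]
  set P := pairNorm s0 r0 f1 f2 g1 g2 with hP
  set S1 := supOn (Set.Icc s0 r0) (f1 - g1) with hS1
  have hS1P : S1 ≤ P := le_max_left _ _
  have hS1n : 0 ≤ S1 := supOn_nonneg _ _
  have hPn : 0 ≤ P := le_trans hS1n hS1P
  set Ef := E1f c s0 r0 L1 N1 K1 L2 N2 K2 f1 f2 v with hEfd
  set Eg := E1f c s0 r0 L1 N1 K1 L2 N2 K2 g1 g2 v with hEgd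
  set Hff := H1f c s0 r0 L1 N1 K1 L2 N2 K2 f1 f2 v with hHffd
  set Hgg := H1f c s0 r0 L1 N1 K1 L2 N2 K2 g1 g2 v with hHggd
  set Lfv := L1 f1 v; set Lgv := L1 g1 v
  have hdec : rfun c s0 r0 L1 N1 K1 L2 N2 K2 f1 f2 v
      - rfun c s0 r0 L1 N1 K1 L2 N2 K2 g1 g2 v
      = Hff * ((1 / v ^ c.nu) * (Ef / Lfv - Eg / Lgv))
        + (Eg / (Lgv * v ^ c.nu)) * (Hff - Hgg) := by
    unfold rfun
    show Ef * Hff / (Lfv * v ^ c.nu) - Eg * Hgg / (Lgv * v ^ c.nu) = _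
    field_simp [hLf.ne', hLg.ne', hX2.ne']
    ring
  rw [hdec]
  have d1 : |Ef / Lfv - Eg / Lgv|
      ≤ (E1til c s0 r0 * P) / (c.L1m * v ^ c.mu)
        + (c.Lt1 * P) / ((c.L1m * v ^ c.mu) * (c.L1m * v ^ c.mu)) := by
    refine (div_diff_bound hLf hLg hEg.le).trans (add_le_add ?_ ?_)
    · exact div_le_div₀ (mul_nonneg hE1tn hPn) (hE1lip v hv) hLmX hLbf.1
    · refine div_le_div₀ (mul_nonneg hLt1.le hPn) ?_ (mul_pos hLmX hLmX)
        (mul_le_mul hLbf.1 hLbg.1 hLmX.le hLf.le)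
      calc Eg * |Lfv - Lgv| ≤ 1 * (c.Lt1 * P) :=
            mul_le_mul hEg1 ((hLipL v hv).trans
              (mul_le_mul_of_nonneg_left hS1P hLt1.le)) (abs_nonneg _) zero_le_one
        _ = c.Lt1 * P := one_mul _
  have t1 : |Hff * ((1 / v ^ c.nu) * (Ef / Lfv - Eg / Lgv))|
      ≤ H1sup c s0 r0 * ((1 / v ^ c.nu) * ((E1til c s0 r0 * P) / (c.L1m * v ^ c.mu)
        + (c.Lt1 * P) / ((c.L1m * v ^ c.mu) * (c.L1m * v ^ c.mu)))) := by
    rw [abs_mul, abs_mul, abs_of_nonneg hH1f0, abs_of_pos (one_div_pos.2 hX2)]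
    refine mul_le_mul hH1fs (mul_le_mul_of_nonneg_left d1 (one_div_pos.2 hX2).le)
      (mul_nonneg (one_div_pos.2 hX2).le (abs_nonneg _)) hH1s.le
  have t2 : |(Eg / (Lgv * v ^ c.nu)) * (Hff - Hgg)|
      ≤ (1 / (c.L1m * v ^ c.mu * v ^ c.nu)) * (H1til c s0 r0 * P) := by
    rw [abs_mul]
    refine mul_le_mul ?_ (hH1lip v hv) (abs_nonneg _)
      (one_div_pos.2 (mul_pos hLmX hX2)).le
    rw [abs_div, abs_of_pos hEg, abs_of_pos (mul_pos hLg hX2)]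
    exact div_le_div₀ zero_le_one hEg1 (mul_pos hLmX hX2)
      (mul_le_mul_of_nonneg_right hLbg.1 hX2.le)
  refine (abs_add_le _ _).trans ((add_le_add t1 t2).trans (le_of_eq ?_))
  rw [he1, he2]
  unfold Dac Dbc
  field_simp [hL1m.ne', hX1.ne', hX2.ne']
  ring

set_option maxHeartbeats 1000000 in
lemma G1_lip (hF : Facts c s0 r0 L1 N1 K1 L2 N2 K2 f1 f2)
    (hG : Facts c s0 r0 L1 N1 K1 L2 N2 K2 g1 g2)
    (hLt1 : 0 < c.Lt1) (hNt1 : 0 < c.Nt1) (hKt1 : 0 < c.Kt1) (hKt2 : 0 < c.Kt2)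
    (hLipL : ∀ v ∈ Set.Icc s0 r0,
      |L1 f1 v - L1 g1 v| ≤ c.Lt1 * supOn (Set.Icc s0 r0) (f1 - g1))
    (hLipN : ∀ v ∈ Set.Icc s0 r0,
      |N1 f1 v - N1 g1 v| ≤ c.Nt1 * supOn (Set.Icc s0 r0) (f1 - g1))
    (hLipK : ∀ v ∈ Set.Icc s0 r0,
      |K1 f1 v - K1 g1 v| ≤ c.Kt1 * v ^ (-c.mu) * supOn (Set.Icc s0 r0) (f1 - g1))
    (hHlip : |Hf c s0 r0 L1 N1 K1 L2 N2 K2 f1 f2 - Hf c s0 r0 L1 N1 K1 L2 N2 K2 g1 g2|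
      ≤ Htil c s0 r0 * pairNorm s0 r0 f1 f2 g1 g2) :
    ∀ η ∈ Set.Icc s0 r0,
      |G1f c s0 r0 L1 N1 K1 L2 N2 K2 f1 f2 η - G1f c s0 r0 L1 N1 K1 L2 N2 K2 g1 g2 η|
        ≤ G1til c s0 r0 * pairNorm s0 r0 f1 f2 g1 g2 := by
  have hE1tn : 0 ≤ E1til c s0 r0 :=
    (E1til_pos hF.hs0 hF.hr0 hF.hmu hF.hnu0 hF.ha hF.hD1 hF.hL1m hF.hN1M hF.hK1M hF.hK1m
      hLt1 hNt1 hKt1 hKt2 hF.hsr).le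
  have hE1lip := E1_lip hF hG hLt1 hNt1 hKt1 hKt2 hLipL hLipN hLipK hHlip
  have hH1lip := H1_lip hF hG hLipK hKt1 hE1tn hE1lip
  have hrlip := r_lip hF hG hLt1 hKt1 hF.hK1M hE1tn hE1lip hH1lip hLipL
  intro η hη
  have hPn : 0 ≤ pairNorm s0 r0 f1 f2 g1 g2 := pairNorm_nonneg _ _ _ _ _ _
  have hH1s := H1sup_pos c (r0 := r0) hF.hs0 hF.hmu hF.hnu0 hF.hK1M
  have hH1tn := H1til_nonneg hF.hs0 hF.hmu hF.hnu0 hKt1 hF.hK1M hE1tn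
  have hL1m := hF.hL1m
  have hmu := hF.hmu; have hnu0 := hF.hnu0
  have hDan : 0 ≤ Dac c s0 r0 := by
    unfold Dac
    exact add_nonneg (div_nonneg (mul_nonneg hH1s.le hE1tn) hL1m.le)
      (div_nonneg hH1tn hL1m.le)
  have hDbn : 0 ≤ Dbc c s0 r0 := by
    unfold Dbc
    exact div_nonneg (mul_nonneg hH1s.le hLt1.le) (pow_pos hL1m 2).le
  set P := pairNorm s0 r0 f1 f2 g1 g2 with hP
  have hq1 : (1:ℝ) < c.mu + c.nu := by linarith
  have hq2 : (1:ℝ) < 2 * c.mu + c.nu := by linarith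
  have i1 := intble_rpow (p := c.mu + c.nu) hF.hs0 hη.1 (P * Dac c s0 r0)
  have i2 := intble_rpow (p := 2 * c.mu + c.nu) hF.hs0 hη.1 (P * Dbc c s0 r0)
  rw [G1f_eq, G1f_eq,
    ← intervalIntegral.integral_sub (II_of_contOn hη (r_cont hF)) (II_of_contOn hη (r_cont hG))]
  have key : |∫ v in s0..η, (rfun c s0 r0 L1 N1 K1 L2 N2 K2 f1 f2 v
      - rfun c s0 r0 L1 N1 K1 L2 N2 K2 g1 g2 v)|
      ≤ ∫ v in s0..η, ((P * Dac c s0 r0) * v ^ (-(c.mu + c.nu))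
        + (P * Dbc c s0 r0) * v ^ (-(2 * c.mu + c.nu))) := by
    apply abs_int_le hη.1
      ((II_of_contOn hη (r_cont hF)).sub (II_of_contOn hη (r_cont hG))) (i1.add i2)
    intro v hv
    exact hrlip v ⟨hv.1, le_trans hv.2 hη.2⟩
  refine key.trans ?_
  rw [intervalIntegral.integral_add i1 i2]
  have j1 := int_term_le hF.hs0 hη.1 hq1 (mul_nonneg hPn hDan)
  have j2 := int_term_le hF.hs0 hη.1 hq2 (mul_nonneg hPn hDbn)
  have hsp1 : (0:ℝ) < s0 ^ (c.mu + c.nu - 1) := Real.rpow_pos_of_pos hF.hs0 _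
  have hsp2 : (0:ℝ) < s0 ^ (2 * c.mu + c.nu - 1) := Real.rpow_pos_of_pos hF.hs0 _
  have hqq1 : (0:ℝ) < c.mu + c.nu - 1 := by linarith
  have hqq2 : (0:ℝ) < 2 * c.mu + c.nu - 1 := by linarith
  have efin : (P * Dac c s0 r0) / ((c.mu + c.nu - 1) * s0 ^ (c.mu + c.nu - 1))
      + (P * Dbc c s0 r0) / ((2 * c.mu + c.nu - 1) * s0 ^ (2 * c.mu + c.nu - 1))
      = G1til c s0 r0 * P := by
    have e1 : Phi1til c s0 r0 = E1til c s0 r0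
        / (c.L1m * (c.mu + c.nu - 1) * s0 ^ (c.mu + c.nu - 1))
        + c.Lt1 / (c.L1m ^ 2 * (2 * c.mu + c.nu - 1) * s0 ^ (2 * c.mu + c.nu - 1)) := rfl
    have e2 : G1til c s0 r0 = H1sup c s0 r0 * Phi1til c s0 r0
        + H1til c s0 r0 / (c.L1m * (c.mu + c.nu - 1) * s0 ^ (c.mu + c.nu - 1)) := rfl
    rw [e2, e1]
    unfold Dac Dbc
    field_simp [hL1m.ne', hsp1.ne', hsp2.ne', hqq1.ne', hqq2.ne']
    ring
  linarith [j1, j2]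

end G1Final

theorem stmt9 (c : Cst) (s0 r0 : ℝ) (L1 N1 K1 L2 N2 K2 : (ℝ → ℝ) → ℝ → ℝ)
    (hpos : PosC c s0 r0) (hA : Assum c s0 r0 L1 N1 K1 L2 N2 K2)
    (f1 f2 : ℝ → ℝ) (hf1 : f1 ∈ C1 s0 r0) (hf2 : f2 ∈ Mset r0)
    (g1 g2 : ℝ → ℝ) (hg1 : g1 ∈ C1 s0 r0) (hg2 : g2 ∈ Mset r0) :
    ∀ η ∈ Set.Icc s0 r0,
      |G1f c s0 r0 L1 N1 K1 L2 N2 K2 f1 f2 η - G1f c s0 r0 L1 N1 K1 L2 N2 K2 g1 g2 η| ≤ G1til c s0 r0 * pairNorm s0 r0 f1 f2 g1 g2 := by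
  obtain ⟨ha, hnu0, hnu1, hmu, hs0, hsr, hD1, hD2, hQ, hD1s, hD2s, hL1m, hL1M, hN1m, hN1M,
    hK1m, hK1M, hL2m, hL2M, hN2m, hN2M, hK2m, hK2M, hLt1, hNt1, hKt1, hLt2, hNt2, hKt2⟩ := hpos
  obtain ⟨hA1, hA2, hA3, hA4, hA5, hA6⟩ := hA
  have hHgef : Hinf c s0 r0 ≤ Hf c s0 r0 L1 N1 K1 L2 N2 K2 f1 f2 :=
    Hf_ge_Hinf hs0 hsr hmu hnu0 hK1m hK2m (hA1 f1 hf1).2.2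
      (fun v hv => (hA3 f1 hf1 v hv).2.2.2.2.1)
      (fun v hv => (hA4 f2 hf2 v hv).2.2.2.2.1)
  have hHgeg : Hinf c s0 r0 ≤ Hf c s0 r0 L1 N1 K1 L2 N2 K2 g1 g2 :=
    Hf_ge_Hinf hs0 hsr hmu hnu0 hK1m hK2m (hA1 g1 hg1).2.2
      (fun v hv => (hA3 g1 hg1 v hv).2.2.2.2.1)
      (fun v hv => (hA4 g2 hg2 v hv).2.2.2.2.1)
  have hF : Facts c s0 r0 L1 N1 K1 L2 N2 K2 f1 f2 :=
    ⟨hs0, hsr, hmu, hnu0, hnu1, ha, hD1, hL1m, hN1m, hN1M, hK1m, hK1M,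
      (hA1 f1 hf1).1, (hA1 f1 hf1).2.1, (hA1 f1 hf1).2.2,
      fun v hv => ⟨(hA3 f1 hf1 v hv).1, (hA3 f1 hf1 v hv).2.1⟩,
      fun v hv => ⟨(hA3 f1 hf1 v hv).2.2.1, (hA3 f1 hf1 v hv).2.2.2.1⟩,
      fun v hv => ⟨(hA3 f1 hf1 v hv).2.2.2.2.1, (hA3 f1 hf1 v hv).2.2.2.2.2⟩, hHgef⟩
  have hG : Facts c s0 r0 L1 N1 K1 L2 N2 K2 g1 g2 :=
    ⟨hs0, hsr, hmu, hnu0, hnu1, ha, hD1, hL1m, hN1m, hN1M, hK1m, hK1M,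
      (hA1 g1 hg1).1, (hA1 g1 hg1).2.1, (hA1 g1 hg1).2.2,
      fun v hv => ⟨(hA3 g1 hg1 v hv).1, (hA3 g1 hg1 v hv).2.1⟩,
      fun v hv => ⟨(hA3 g1 hg1 v hv).2.2.1, (hA3 g1 hg1 v hv).2.2.2.1⟩,
      fun v hv => ⟨(hA3 g1 hg1 v hv).2.2.2.2.1, (hA3 g1 hg1 v hv).2.2.2.2.2⟩, hHgeg⟩
  have hHlip : |Hf c s0 r0 L1 N1 K1 L2 N2 K2 f1 f2 - Hf c s0 r0 L1 N1 K1 L2 N2 K2 g1 g2|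
      ≤ Htil c s0 r0 * pairNorm s0 r0 f1 f2 g1 g2 :=
    Hf_lip hs0 hsr hmu hnu0 hKt1 hKt2 hK2m hK2M (hA1 f1 hf1).2.2 (hA1 g1 hg1).2.2
      (hA2 f2 hf2).2.2 (hA2 g2 hg2).2.2
      (fun v hv => ⟨(hA4 f2 hf2 v hv).2.2.2.2.1, (hA4 f2 hf2 v hv).2.2.2.2.2⟩)
      (fun v hv => ⟨(hA4 g2 hg2 v hv).2.2.2.2.1, (hA4 g2 hg2 v hv).2.2.2.2.2⟩)
      (fun v hv => (hA5 f1 hf1 g1 hg1 v hv).2.2)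
      (fun v hv => (hA6 f2 hf2 g2 hg2 v hv).2.2)
  exact G1_lip hF hG hLt1 hNt1 hKt1 hKt2
    (fun v hv => (hA5 f1 hf1 g1 hg1 v hv).1)
    (fun v hv => (hA5 f1 hf1 g1 hg1 v hv).2.1)
    (fun v hv => (hA5 f1 hf1 g1 hg1 v hv).2.2) hHlip
end
end

section
/- Under assumptions (A1)–(A4) with μ > 2, for every (f1,f2) ∈ 𝒦 and every η ≥ r0 one has E2inf ≤ E2(η; f1,f2) ≤ 1, where E2inf = exp(−[a·N2M/(L2m·(μ−1)·r0^(2μ−2)) + D2·K2M/(H_inf·L2m·(2μ+ν−1)·r0^(2μ+ν−1))]) and H_inf = (K1m/(μ+ν−1))·(s0^(−(μ+ν−1)) − r0^(−(μ+ν−1))). -/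
open MeasureTheory Filter Topology

noncomputable section

private lemma myIntegrable (a b p : ℝ) (ha : 0 < a) (hab : a ≤ b) :
    IntervalIntegrable (fun v : ℝ => v ^ p) MeasureTheory.volume a b :=
  intervalIntegral.intervalIntegrable_rpow
    (Or.inr (Set.notMem_uIcc_of_lt ha (ha.trans_le hab)))

private lemma myInt (a b p : ℝ) (ha : 0 < a) (hab : a ≤ b) (hp : p + 1 < 0) :
    ∫ v in a..b, v ^ p ≤ a ^ (p + 1) / (-(p + 1)) := by
  rw [integral_rpow (Or.inr ⟨by intro h; rw [h] at hp; linarith,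
    Set.notMem_uIcc_of_lt ha (ha.trans_le hab)⟩)]
  have hb : 0 < b ^ (p + 1) := Real.rpow_pos_of_pos (ha.trans_le hab) _
  have h1 : (b ^ (p + 1) - a ^ (p + 1)) / (p + 1)
      = (a ^ (p + 1) - b ^ (p + 1)) / (-(p + 1)) := by
    rw [div_neg, neg_div', neg_sub]
  rw [h1]
  exact div_le_div_of_nonneg_right (by linarith) (by linarith)

theorem stmt10 (c : Cst) (s0 r0 : ℝ) (L1 N1 K1 L2 N2 K2 : (ℝ → ℝ) → ℝ → ℝ)
    (hpos : PosC c s0 r0) (hA : Assum c s0 r0 L1 N1 K1 L2 N2 K2)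
    (f1 f2 : ℝ → ℝ) (hf1 : f1 ∈ C1 s0 r0) (hf2 : f2 ∈ Mset r0) :
    ∀ η ∈ Set.Ici r0,
      E2inf c s0 r0 ≤ E2f c s0 r0 L1 N1 K1 L2 N2 K2 f1 f2 η ∧ E2f c s0 r0 L1 N1 K1 L2 N2 K2 f1 f2 η ≤ 1 := by
  obtain ⟨ha, hnu0, hnu1, hmu, hs0, hsr, hD1, hD2, hQ, hD1s, hD2s, hL1m, hL1M, hN1m, hN1M,
    hK1m, hK1M, hL2m, hL2M, hN2m, hN2M, hK2m, hK2M, hLt1, hNt1, hKt1, hLt2, hNt2, hKt2⟩ := hpos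
  obtain ⟨hC1, hC2, hB1, hB2, -, -⟩ := hA
  have hr0 : 0 < r0 := hs0.trans hsr
  have hmn1 : 0 < c.mu + c.nu - 1 := by linarith
  have hHinfpos : 0 < Hinf c s0 r0 := by
    have h1 : r0 ^ (-(c.mu + c.nu - 1)) < s0 ^ (-(c.mu + c.nu - 1)) :=
      Real.rpow_lt_rpow_of_neg hs0 hsr (by linarith)
    exact mul_pos (div_pos hK1m hmn1) (by linarith)
  have hL2pos : ∀ v ∈ Set.Ici r0, 0 < L2 f2 v := fun v hv =>
    lt_of_lt_of_le (mul_pos hL2m (Real.rpow_pos_of_pos (hr0.trans_le hv) _))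
      (hB2 f2 hf2 v hv).1
  have hK1c := (hC1 f1 hf1).2.2
  have hL2c := (hC2 f2 hf2).1
  have hN2c := (hC2 f2 hf2).2.1
  have hK2c := (hC2 f2 hf2).2.2
  -- H ≥ Hinf
  have hHge : Hinf c s0 r0 ≤ Hf c s0 r0 L1 N1 K1 L2 N2 K2 f1 f2 := by
    have h2 : 0 ≤ ∫ v in Set.Ioi r0, K2 f2 v / v ^ c.nu := by
      apply MeasureTheory.setIntegral_nonneg measurableSet_Ioi
      intro v hv
      have hv0 : 0 < v := hr0.trans hv
      have hK := (hB2 f2 hf2 v (Set.Ioi_subset_Ici_self hv)).2.2.2.2.1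
      have hK0 : 0 ≤ K2 f2 v :=
        le_trans (le_of_lt (mul_pos hK2m (Real.rpow_pos_of_pos hv0 _))) hK
      positivity
    have h1 : Hinf c s0 r0 ≤ ∫ v in s0..r0, K1 f1 v / v ^ c.nu := by
      have heq : (∫ v in s0..r0, c.K1m * v ^ (-(c.mu + c.nu))) = Hinf c s0 r0 := by
        rw [intervalIntegral.integral_const_mul,
          integral_rpow (Or.inr ⟨by intro h; linarith,
            Set.notMem_uIcc_of_lt hs0 hr0⟩)]
        rw [show -(c.mu + c.nu) + 1 = -(c.mu + c.nu - 1) by ring]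
        unfold Hinf
        rw [div_neg, ← neg_div, neg_sub]
        ring
      rw [← heq]
      apply intervalIntegral.integral_mono_on hsr.le
      · exact (myIntegrable s0 r0 _ hs0 hsr.le).const_mul _
      · apply ContinuousOn.intervalIntegrable_of_Icc hsr.le
        exact hK1c.div
          (ContinuousOn.rpow_const continuousOn_id
            (fun x hx => Or.inl (ne_of_gt (lt_of_lt_of_le hs0 hx.1))))
          (fun x hx => ne_of_gt (Real.rpow_pos_of_pos (lt_of_lt_of_le hs0 hx.1) _))
      · intro v hv
        have hv0 : 0 < v := lt_of_lt_of_le hs0 hv.1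
        have hK := (hB1 f1 hf1 v hv).2.2.2.2.1
        have he : c.K1m * v ^ (-(c.mu + c.nu)) = c.K1m * v ^ (-c.mu) / v ^ c.nu := by
          rw [show -(c.mu + c.nu) = -c.mu - c.nu by ring, Real.rpow_sub hv0]
          ring
        rw [he]
        exact div_le_div_of_nonneg_right hK (le_of_lt (Real.rpow_pos_of_pos hv0 _))
    unfold Hf
    linarith
  intro η hη
  simp only [Set.mem_Ici] at hη
  have hHpos : 0 < Hf c s0 r0 L1 N1 K1 L2 N2 K2 f1 f2 := lt_of_lt_of_le hHinfpos hHge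
  set HH := Hf c s0 r0 L1 N1 K1 L2 N2 K2 f1 f2 with hHHdef
  -- nonnegativity of the integrand
  have hgnn : ∀ v ∈ Set.Icc r0 η,
      0 ≤ 2 * c.a * v * (N2 f2 v / L2 f2 v) + c.D2 / HH * (K2 f2 v / (L2 f2 v * v ^ c.nu)) := by
    intro v hv
    have hvr : r0 ≤ v := hv.1
    have hv0 : 0 < v := hr0.trans_le hvr
    obtain ⟨hL2l, hL2u, hN2l, hN2u, hK2l, hK2u⟩ := hB2 f2 hf2 v hvr
    have hLp : 0 < L2 f2 v := hL2pos v hvr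
    have hN0 : 0 ≤ N2 f2 v :=
      le_trans (le_of_lt (mul_pos hN2m (Real.rpow_pos_of_pos hv0 _))) hN2l
    have hK0 : 0 ≤ K2 f2 v :=
      le_trans (le_of_lt (mul_pos hK2m (Real.rpow_pos_of_pos hv0 _))) hK2l
    have hvn : 0 < v ^ c.nu := Real.rpow_pos_of_pos hv0 _
    positivity
  constructor
  · -- lower bound
    unfold E2f E2inf
    rw [← hHHdef, Real.exp_le_exp, neg_le_neg_iff]
    set A1 : ℝ := 2 * c.a * (c.N2M / c.L2m) with hA1def
    set A2 : ℝ := c.D2 / Hinf c s0 r0 * (c.K2M / c.L2m) with hA2def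
    have hA1 : 0 < A1 := by rw [hA1def]; positivity
    have hA2 : 0 < A2 := by rw [hA2def]; positivity
    have hsub : Set.Icc r0 η ⊆ Set.Ici r0 := fun x hx => hx.1
    have hLne : ∀ x ∈ Set.Icc r0 η, L2 f2 x ≠ 0 := fun x hx => ne_of_gt (hL2pos x (hsub hx))
    have hvpow : ContinuousOn (fun v : ℝ => v ^ c.nu) (Set.Icc r0 η) :=
      ContinuousOn.rpow_const continuousOn_id
        (fun x hx => Or.inl (ne_of_gt (lt_of_lt_of_le hr0 hx.1)))
    have hint_g : IntervalIntegrable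
        (fun v => 2 * c.a * v * (N2 f2 v / L2 f2 v)
          + c.D2 / HH * (K2 f2 v / (L2 f2 v * v ^ c.nu))) MeasureTheory.volume r0 η := by
      apply ContinuousOn.intervalIntegrable_of_Icc hη
      apply ContinuousOn.add
      · exact ((continuous_const.mul continuous_id).continuousOn).mul
          ((hN2c.mono hsub).div (hL2c.mono hsub) hLne)
      · exact continuousOn_const.mul
          ((hK2c.mono hsub).div ((hL2c.mono hsub).mul hvpow)
            (fun x hx => mul_ne_zero (hLne x hx)
              (ne_of_gt (Real.rpow_pos_of_pos (lt_of_lt_of_le hr0 hx.1) _))))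
    have hint_m : IntervalIntegrable
        (fun v : ℝ => A1 * v ^ (1 - 2 * c.mu) + A2 * v ^ (-(2 * c.mu + c.nu)))
        MeasureTheory.volume r0 η :=
      ((myIntegrable r0 η _ hr0 hη).const_mul A1).add
        ((myIntegrable r0 η _ hr0 hη).const_mul A2)
    have hmaj : ∀ v ∈ Set.Icc r0 η,
        2 * c.a * v * (N2 f2 v / L2 f2 v) + c.D2 / HH * (K2 f2 v / (L2 f2 v * v ^ c.nu))
          ≤ A1 * v ^ (1 - 2 * c.mu) + A2 * v ^ (-(2 * c.mu + c.nu)) := by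
      intro v hv
      have hvr : r0 ≤ v := hv.1
      have hv0 : 0 < v := hr0.trans_le hvr
      obtain ⟨hL2l, hL2u, hN2l, hN2u, hK2l, hK2u⟩ := hB2 f2 hf2 v hvr
      have hLp : 0 < L2 f2 v := hL2pos v hvr
      have hN0 : 0 ≤ N2 f2 v :=
        le_trans (le_of_lt (mul_pos hN2m (Real.rpow_pos_of_pos hv0 _))) hN2l
      have hK0 : 0 ≤ K2 f2 v :=
        le_trans (le_of_lt (mul_pos hK2m (Real.rpow_pos_of_pos hv0 _))) hK2l
      have hvm : 0 < v ^ c.mu := Real.rpow_pos_of_pos hv0 _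
      have hvn : 0 < v ^ c.nu := Real.rpow_pos_of_pos hv0 _
      have hneg : v ^ (-c.mu) = (v ^ c.mu)⁻¹ := Real.rpow_neg hv0.le _
      have term1 : 2 * c.a * v * (N2 f2 v / L2 f2 v) ≤ A1 * v ^ (1 - 2 * c.mu) := by
        have t1 : N2 f2 v / L2 f2 v ≤ c.N2M * v ^ (-c.mu) / (c.L2m * v ^ c.mu) :=
          div_le_div₀ (by positivity) hN2u (by positivity) hL2l
        have t2 : 2 * c.a * v * (N2 f2 v / L2 f2 v)
            ≤ 2 * c.a * v * (c.N2M * v ^ (-c.mu) / (c.L2m * v ^ c.mu)) :=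
          mul_le_mul_of_nonneg_left t1 (by positivity)
        have h1 : v ^ (1 - 2 * c.mu) * v ^ c.mu * v ^ c.mu = v := by
          rw [← Real.rpow_add hv0, ← Real.rpow_add hv0,
            show 1 - 2 * c.mu + c.mu + c.mu = 1 by ring, Real.rpow_one]
        have te : 2 * c.a * v * (c.N2M * v ^ (-c.mu) / (c.L2m * v ^ c.mu))
            = A1 * v ^ (1 - 2 * c.mu) := by
          rw [hneg, hA1def]
          field_simp
          linear_combination -h1
        linarith [t2, te.le, te.ge]
      have term2 : c.D2 / HH * (K2 f2 v / (L2 f2 v * v ^ c.nu))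
          ≤ A2 * v ^ (-(2 * c.mu + c.nu)) := by
        have t1 : c.D2 / HH ≤ c.D2 / Hinf c s0 r0 :=
          div_le_div_of_nonneg_left hD2.le hHinfpos hHge
        have t2 : K2 f2 v / (L2 f2 v * v ^ c.nu)
            ≤ c.K2M * v ^ (-c.mu) / (c.L2m * v ^ c.mu * v ^ c.nu) :=
          div_le_div₀ (by positivity) hK2u (by positivity)
            (mul_le_mul_of_nonneg_right hL2l hvn.le)
        have t3 : c.D2 / HH * (K2 f2 v / (L2 f2 v * v ^ c.nu))
            ≤ c.D2 / Hinf c s0 r0 * (c.K2M * v ^ (-c.mu) / (c.L2m * v ^ c.mu * v ^ c.nu)) := by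
          apply mul_le_mul t1 t2 (by positivity) (by positivity)
        have h3 : v ^ (-(2 * c.mu + c.nu)) = (v ^ c.mu * v ^ c.mu * v ^ c.nu)⁻¹ := by
          rw [Real.rpow_neg hv0.le, ← Real.rpow_add hv0, ← Real.rpow_add hv0]
          norm_num
          ring_nf
        have te : c.D2 / Hinf c s0 r0 * (c.K2M * v ^ (-c.mu) / (c.L2m * v ^ c.mu * v ^ c.nu))
            = A2 * v ^ (-(2 * c.mu + c.nu)) := by
          rw [hneg, h3, hA2def]
          field_simp
        linarith [t3, te.le]
      linarith [term1, term2]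
    have hmono := intervalIntegral.integral_mono_on hη hint_g hint_m hmaj
    have hsplit : (∫ v in r0..η, (A1 * v ^ (1 - 2 * c.mu) + A2 * v ^ (-(2 * c.mu + c.nu))))
        = A1 * (∫ v in r0..η, v ^ (1 - 2 * c.mu))
          + A2 * ∫ v in r0..η, v ^ (-(2 * c.mu + c.nu)) := by
      rw [intervalIntegral.integral_add ((myIntegrable r0 η _ hr0 hη).const_mul A1)
        ((myIntegrable r0 η _ hr0 hη).const_mul A2),
        intervalIntegral.integral_const_mul, intervalIntegral.integral_const_mul]
    have hb1 : (∫ v in r0..η, v ^ (1 - 2 * c.mu))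
        ≤ r0 ^ (1 - 2 * c.mu + 1) / (-(1 - 2 * c.mu + 1)) :=
      myInt r0 η _ hr0 hη (by linarith)
    have hb2 : (∫ v in r0..η, v ^ (-(2 * c.mu + c.nu)))
        ≤ r0 ^ (-(2 * c.mu + c.nu) + 1) / (-(-(2 * c.mu + c.nu) + 1)) :=
      myInt r0 η _ hr0 hη (by linarith)
    have e1 : r0 ^ (1 - 2 * c.mu + 1) = (r0 ^ (2 * c.mu - 2))⁻¹ := by
      rw [show (1 - 2 * c.mu + 1) = -(2 * c.mu - 2) by ring, Real.rpow_neg hr0.le]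
    have e2 : r0 ^ (-(2 * c.mu + c.nu) + 1) = (r0 ^ (2 * c.mu + c.nu - 1))⁻¹ := by
      rw [show (-(2 * c.mu + c.nu) + 1) = -(2 * c.mu + c.nu - 1) by ring, Real.rpow_neg hr0.le]
    have hfin : A1 * (r0 ^ (1 - 2 * c.mu + 1) / (-(1 - 2 * c.mu + 1)))
        + A2 * (r0 ^ (-(2 * c.mu + c.nu) + 1) / (-(-(2 * c.mu + c.nu) + 1)))
        = c.a * c.N2M / (c.L2m * (c.mu - 1) * r0 ^ (2 * c.mu - 2))
          + c.D2 * c.K2M / (Hinf c s0 r0 * c.L2m * (2 * c.mu + c.nu - 1)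
            * r0 ^ (2 * c.mu + c.nu - 1)) := by
      rw [e1, e2, hA1def, hA2def]
      have hp1 : (0:ℝ) < r0 ^ (2 * c.mu - 2) := Real.rpow_pos_of_pos hr0 _
      have hp2 : (0:ℝ) < r0 ^ (2 * c.mu + c.nu - 1) := Real.rpow_pos_of_pos hr0 _
      have hm1 : (0:ℝ) < c.mu - 1 := by linarith
      have hm2 : (0:ℝ) < 2 * c.mu + c.nu - 1 := by linarith
      rw [show -(1 - 2 * c.mu + 1) = 2 * (c.mu - 1) by ring,
        show -(-(2 * c.mu + c.nu) + 1) = 2 * c.mu + c.nu - 1 by ring]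
      field_simp
    calc c.a * c.N2M / (c.L2m * (c.mu - 1) * r0 ^ (2 * c.mu - 2))
          + c.D2 * c.K2M / (Hinf c s0 r0 * c.L2m * (2 * c.mu + c.nu - 1)
            * r0 ^ (2 * c.mu + c.nu - 1))
        = A1 * (r0 ^ (1 - 2 * c.mu + 1) / (-(1 - 2 * c.mu + 1)))
          + A2 * (r0 ^ (-(2 * c.mu + c.nu) + 1) / (-(-(2 * c.mu + c.nu) + 1))) := hfin.symm
      _ ≥ A1 * (∫ v in r0..η, v ^ (1 - 2 * c.mu))
          + A2 * ∫ v in r0..η, v ^ (-(2 * c.mu + c.nu)) := by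
          apply add_le_add
          · exact mul_le_mul_of_nonneg_left hb1 hA1.le
          · exact mul_le_mul_of_nonneg_left hb2 hA2.le
      _ = ∫ v in r0..η, (A1 * v ^ (1 - 2 * c.mu) + A2 * v ^ (-(2 * c.mu + c.nu))) := hsplit.symm
      _ ≥ _ := hmono
  · -- upper bound
    unfold E2f
    rw [← hHHdef]
    have h0 : 0 ≤ ∫ v in r0..η,
        (2 * c.a * v * (N2 f2 v / L2 f2 v) + c.D2 / HH * (K2 f2 v / (L2 f2 v * v ^ c.nu))) :=
      intervalIntegral.integral_nonneg hη hgnn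
    calc Real.exp (-(∫ v in r0..η,
          (2 * c.a * v * (N2 f2 v / L2 f2 v)
            + c.D2 / HH * (K2 f2 v / (L2 f2 v * v ^ c.nu)))))
        ≤ Real.exp 0 := Real.exp_le_exp.2 (by linarith)
      _ = 1 := Real.exp_zero
end
end
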